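/- If Θ ⊊ Π is normal, then W(Θ)′ = W(Θ). -/

import Mathlib

open Pointwise
open scoped RealInnerProductSpace

noncomputable section

variable {V : Type*} [NormedAddCommGroup V] [InnerProductSpace ℝ V] [FiniteDimensional ℝ V]

/-- The coroot `α∨ = 2α/⟨α,α⟩`. -/
def coroot (α : V) : V := (2 / ⟪α, α⟫) • α

/-- The reflection `s_α` in the root `α`, as a linear automorphism of `V`
(the orthogonal reflection fixing the hyperplane orthogonal to `α`). -/
def rootRefl (α : V) : V ≃ₗ[ℝ] V :=
  ((Submodule.span ℝ {α})ᗮ.reflection).toLinearEquiv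

/-- `w` is the longest element of the subgroup `H` with respect to a positive system `P`:
it lies in `H` and maps `P` onto `-P`. -/
def IsLongest (H : Subgroup (V ≃ₗ[ℝ] V)) (P : Set V) (w : V ≃ₗ[ℝ] V) : Prop :=
  w ∈ H ∧ ⇑w '' P = (fun x => -x) '' P

open Classical in
/-- The longest element of `H` with respect to `P` (junk value `1` if there is none). -/
def longest (H : Subgroup (V ≃ₗ[ℝ] V)) (P : Set V) : V ≃ₗ[ℝ] V :=
  if h : ∃ w, IsLongest H P w then h.choose else 1

/-- The parabolic subgroup `W_Θ` generated by the reflections `s_α`, `α ∈ Θ`. -/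
def parabolicSub (Θ : Set V) : Subgroup (V ≃ₗ[ℝ] V) :=
  Subgroup.closure {g | ∃ α ∈ Θ, g = rootRefl α}

/-- `a*_Θ`, the orthogonal complement of the span of `Θ`. -/
def aTheta (Θ : Set V) : Submodule ℝ V := (Submodule.span ℝ Θ)ᗮ

/-- The orthogonal projection onto `a*_Θ`; `resTheta Θ α` is `α|_{a_Θ}`. -/
def resTheta (Θ : Set V) (v : V) : V := ((aTheta Θ).orthogonalProjectionOnto v : V)

/-- The set of indecomposable elements of `P`: the base of a positive system `P`. -/
def baseOf (P : Set V) : Set V := {β ∈ P | ¬ ∃ γ ∈ P, ∃ δ ∈ P, β = γ + δ}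

/-- Data of a root system with a chosen positive system `Δ⁺` and base `Π`. -/
structure RootData (V : Type*) [NormedAddCommGroup V] [InnerProductSpace ℝ V] where
  roots : Set V
  pos : Set V
  base : Set V

namespace RootData

variable (R : RootData V)

/-- The axioms: `Δ` is a finite reduced crystallographic root system spanning `V`,
`Δ⁺` is a positive system with base `Π`. -/
structure IsRootSystem : Prop where
  finite : R.roots.Finite
  span_eq_top : Submodule.span ℝ R.roots = ⊤
  zero_not_mem : (0 : V) ∉ R.roots
  reduced : ∀ α ∈ R.roots, ∀ t : ℝ, t • α ∈ R.roots → t = 1 ∨ t = -1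
  reflect_mem : ∀ α ∈ R.roots, ∀ β ∈ R.roots, rootRefl α β ∈ R.roots
  crystallographic : ∀ α ∈ R.roots, ∀ β ∈ R.roots, ∃ z : ℤ, (z : ℝ) = ⟪β, coroot α⟫
  pos_subset : R.pos ⊆ R.roots
  pos_iff_neg_not_mem : ∀ α ∈ R.roots, (α ∈ R.pos ↔ -α ∉ R.pos)
  base_subset : R.base ⊆ R.pos
  base_indep : LinearIndependent ℝ ((↑) : R.base → V)
  pos_mem_closure : ∀ β ∈ R.pos, β ∈ AddSubmonoid.closure R.base

/-- The Weyl group of `Δ`, generated by the reflections in the roots. -/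
def weylGroup : Subgroup (V ≃ₗ[ℝ] V) :=
  Subgroup.closure {g | ∃ α ∈ R.roots, g = rootRefl α}

/-- The set `S` of simple reflections `s_α`, `α ∈ Π`. -/
def simpleRefls : Set (V ≃ₗ[ℝ] V) := {g | ∃ α ∈ R.base, g = rootRefl α}

/-- `ρ`, half the sum of the positive roots. -/
def rho : V := (2 : ℝ)⁻¹ • ∑ᶠ α ∈ R.pos, α

/-- `w_Θ`, the longest element of `W_Θ`. -/
def wTheta (Θ : Set V) : V ≃ₗ[ℝ] V :=
  longest (parabolicSub Θ) (R.pos ∩ (Submodule.span ℝ Θ : Set V))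

/-- `ρ_Θ = (1/2)(ρ - w_Θ ρ)`. -/
def rhoTheta (Θ : Set V) : V := (2 : ℝ)⁻¹ • (R.rho - R.wTheta Θ R.rho)

/-- `Σ_Θ = {α|_{a_Θ} : α ∈ Δ} ∖ {0}`. -/
def SigmaTheta (Θ : Set V) : Set V := (resTheta Θ '' R.roots) \ {0}

/-- `Σ_Θ⁺ = {α|_{a_Θ} : α ∈ Δ⁺} ∖ {0}`. -/
def SigmaThetaPos (Θ : Set V) : Set V := (resTheta Θ '' R.pos) \ {0}

/-- `W(Θ) = {w ∈ W : wΘ = Θ}`. -/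
def Wset (Θ : Set V) : Set (V ≃ₗ[ℝ] V) := {w | w ∈ R.weylGroup ∧ ⇑w '' Θ = Θ}

/-- `Δ(α)`: the roots whose restriction to `a_Θ` is a real multiple of that of `α`. -/
def rootsAlong (Θ : Set V) (α : V) : Set V :=
  {β ∈ R.roots | ∃ c : ℝ, resTheta Θ β = c • resTheta Θ α}

/-- `Δ⁺(α) = Δ(α) ∩ Δ⁺`. -/
def posAlong (Θ : Set V) (α : V) : Set V := R.rootsAlong Θ α ∩ R.pos

/-- `W_Θ(α)`, the Weyl group of `Δ(α)`. -/
def weylAlong (Θ : Set V) (α : V) : Subgroup (V ≃ₗ[ℝ] V) :=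
  Subgroup.closure {g | ∃ β ∈ R.rootsAlong Θ α, g = rootRefl β}

/-- `σ_α = w^α w_Θ`, where `w^α` is the longest element of `W_Θ(α)`. -/
def sigmaRefl (Θ : Set V) (α : V) : V ≃ₗ[ℝ] V :=
  longest (R.weylAlong Θ α) (R.posAlong Θ α) * R.wTheta Θ

/-- `α` is `Θ`-useful if `σ_α` has order two. -/
def IsUseful (Θ : Set V) (α : V) : Prop := orderOf (R.sigmaRefl Θ α) = 2

/-- `α` is `Θ`-reduced if `α|_{a_Θ} ≠ 0` and `α = α̃`, i.e. `α` belongs to the base `Π(α)`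
of `Δ⁺(α)`. -/
def IsReducedRoot (Θ : Set V) (α : V) : Prop :=
  resTheta Θ α ≠ 0 ∧ α ∈ baseOf (R.posAlong Θ α)

/-- `ʳᵘΔ_Θ⁺`, the set of `Θ`-reduced `Θ`-useful positive roots. -/
def ruPos (Θ : Set V) : Set V :=
  {α ∈ R.pos | R.IsReducedRoot Θ α ∧ R.IsUseful Θ α}

/-- `W(Θ)′`, the subgroup generated by the `σ_α` for `α ∈ ʳᵘΔ_Θ⁺`. -/
def WThetaPrime (Θ : Set V) : Subgroup (V ≃ₗ[ℝ] V) :=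
  Subgroup.closure {g | ∃ α ∈ R.ruPos Θ, g = R.sigmaRefl Θ α}

/-- `ʳᵘΣ_Θ⁺ = {α|_{a_Θ} : α ∈ ʳᵘΔ_Θ⁺}`. -/
def ruSigmaPos (Θ : Set V) : Set V := resTheta Θ '' R.ruPos Θ

/-- `ʳᵘΣ_Θ = ʳᵘΣ_Θ⁺ ∪ (−ʳᵘΣ_Θ⁺)`. -/
def ruSigma (Θ : Set V) : Set V := R.ruSigmaPos Θ ∪ (fun x => -x) '' R.ruSigmaPos Θ

/-- `ᵘΣ_Θ`, the set of restrictions of the `Θ`-useful roots. -/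
def uSigma (Θ : Set V) : Set V := resTheta Θ '' {α ∈ R.roots | R.IsUseful Θ α}

/-- `ᵘΠ_Θ`, the base of `ʳᵘΣ_Θ⁺`. -/
def uPi (Θ : Set V) : Set V := baseOf (R.ruSigmaPos Θ)

/-- `S(Θ) = {σ_γ : γ ∈ ᵘΠ_Θ}`. -/
def SThetaSet (Θ : Set V) : Set (V ≃ₗ[ℝ] V) :=
  {g | ∃ α ∈ R.ruPos Θ, resTheta Θ α ∈ R.uPi Θ ∧ g = R.sigmaRefl Θ α}

/-- `K(Θ) = {w ∈ W : wΘ ⊆ Π}`. -/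
def Kset (Θ : Set V) : Set (V ≃ₗ[ℝ] V) := {w | w ∈ R.weylGroup ∧ ⇑w '' Θ ⊆ R.base}

/-- `Θ` is normal if every simple root outside `Θ` is `Θ`-useful. -/
def IsNormal (Θ : Set V) : Prop := ∀ α ∈ R.base \ Θ, R.IsUseful Θ α

/-- `Θ` is seminormal. -/
def IsSeminormal (Θ : Set V) : Prop :=
  ∃ Ψ : Set V, Θ ⊆ Ψ ∧ Ψ ⊆ R.base ∧ R.uPi Θ = resTheta Θ '' (Ψ \ Θ)

/-- `ξ` is integral: `⟨ξ,α∨⟩ ∈ ℤ` for all roots `α`. -/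
def IsIntegral (ξ : V) : Prop := ∀ α ∈ R.roots, ∃ z : ℤ, ⟪ξ, coroot α⟫ = (z : ℝ)

/-- `ξ` is regular: `⟨ξ,α⟩ ≠ 0` for all roots `α`. -/
def IsRegular (ξ : V) : Prop := ∀ α ∈ R.roots, ⟪ξ, α⟫ ≠ 0

/-- `ξ` is dominant: `⟨ξ,α∨⟩ ≥ 0` for all positive roots `α`. -/
def IsDominant (ξ : V) : Prop := ∀ α ∈ R.pos, 0 ≤ ⟪ξ, coroot α⟫

end RootData

/-- The length of `w` with respect to a generating set `S`. -/
def lengthWrt {G : Type*} [Group G] (S : Set G) (w : G) : ℕ :=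
  sInf {k | ∃ l : List G, (∀ s ∈ l, s ∈ S) ∧ l.prod = w ∧ l.length = k}

/-- A reduced word with letters in `S`. -/
def IsReducedWordWrt {G : Type*} [Group G] (S : Set G) (l : List G) : Prop :=
  (∀ s ∈ l, s ∈ S) ∧ lengthWrt S l.prod = l.length

/-- The Bruhat order with respect to `S`: `x ≤ y` iff some reduced word for `y` contains
a subword which is a reduced word for `x`. -/
def bruhatLEWrt {G : Type*} [Group G] (S : Set G) (x y : G) : Prop :=
  ∃ l : List G, IsReducedWordWrt S l ∧ l.prod = y ∧
    ∃ l' : List G, l'.Sublist l ∧ IsReducedWordWrt S l' ∧ l'.prod = x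

/-- `(W₂,S₂)` is a quasi subsystem of `(W₁,S₁)`: `W₂` is a subgroup of `W₁`, and for every
reduced expression `w = s₁ ⋯ s_k` in `(W₂,S₂)` one has `ℓ₁(w) = ℓ₁(s₁) + ⋯ + ℓ₁(s_k)`. -/
def IsQuasiSubsystemWrt {G : Type*} [Group G] (W₁ W₂ : Subgroup G) (S₁ S₂ : Set G) : Prop :=
  W₂ ≤ W₁ ∧ ∀ l : List G, (∀ s ∈ l, s ∈ S₂) → lengthWrt S₂ l.prod = l.length →
    lengthWrt S₁ l.prod = (l.map (lengthWrt S₁)).sum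


section CorollaryProof

open Submodule

set_option linter.unusedSectionVars false

namespace CorAux

variable {V : Type*} [NormedAddCommGroup V] [InnerProductSpace ℝ V] [FiniteDimensional ℝ V]

lemma rootRefl_apply (α x : V) :
    rootRefl α x = x - (2 * ⟪α, x⟫ / ⟪α, α⟫) • α := by
  rcases eq_or_ne α 0 with rfl | hα
  · have : rootRefl (0 : V) x = x := by
      show (reflection (Submodule.span ℝ ({0} : Set V))ᗮ) x = x
      apply reflection_mem_subspace_eq_self
      rw [Submodule.mem_orthogonal]
      intro u hu
      rw [Submodule.mem_span_singleton] at hu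
      obtain ⟨c, rfl⟩ := hu
      simp
    simp [this]
  · have h0 : ⟪α, α⟫ ≠ 0 := inner_self_ne_zero.mpr hα
    have hmem : x - (⟪α, x⟫ / ⟪α, α⟫) • α ∈ (Submodule.span ℝ {α})ᗮ := by
      rw [Submodule.mem_orthogonal]
      intro u hu
      rw [Submodule.mem_span_singleton] at hu
      obtain ⟨c, rfl⟩ := hu
      rw [real_inner_smul_left, inner_sub_right, real_inner_smul_right]
      field_simp
      ring
    have h2 : ((⟪α, x⟫ / ⟪α, α⟫) • α) ∈ ((Submodule.span ℝ {α})ᗮ)ᗮ := by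
      rw [Submodule.orthogonal_orthogonal]
      exact Submodule.smul_mem _ _ (Submodule.mem_span_singleton_self α)
    have hsplit : x = (x - (⟪α, x⟫ / ⟪α, α⟫) • α) + (⟪α, x⟫ / ⟪α, α⟫) • α := by abel
    show (reflection (Submodule.span ℝ {α})ᗮ) x = _
    conv_lhs => rw [hsplit]
    rw [map_add, reflection_mem_subspace_eq_self hmem,
      reflection_mem_subspace_orthogonalComplement_eq_neg h2]
    have : (2 * ⟪α, x⟫ / ⟪α, α⟫) = ⟪α, x⟫ / ⟪α, α⟫ + ⟪α, x⟫ / ⟪α, α⟫ := by ring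
    rw [this, add_smul]
    abel

lemma rootRefl_self (α : V) : rootRefl α α = -α :=
  reflection_orthogonalComplement_singleton_eq_neg α

lemma rootRefl_inner (α x y : V) : ⟪rootRefl α x, rootRefl α y⟫ = ⟪x, y⟫ :=
  (reflection (Submodule.span ℝ {α})ᗮ).inner_map_map x y

lemma rootRefl_rootRefl (α x : V) : rootRefl α (rootRefl α x) = x :=
  reflection_reflection _ x

lemma rootRefl_mul_self (α : V) : rootRefl α * rootRefl α = 1 := by
  apply LinearEquiv.toLinearMap_injective
  apply LinearMap.ext
  intro x
  simpa using rootRefl_rootRefl α x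

lemma rootRefl_inv (α : V) : (rootRefl α)⁻¹ = rootRefl α :=
  inv_eq_of_mul_eq_one_right (rootRefl_mul_self α)

lemma rootRefl_neg (α : V) : rootRefl (-α) = rootRefl α := by
  apply LinearEquiv.toLinearMap_injective
  apply LinearMap.ext
  intro x
  show rootRefl (-α) x = rootRefl α x
  rw [rootRefl_apply, rootRefl_apply]
  have h1 : ⟪-α, x⟫ = -⟪α, x⟫ := by rw [inner_neg_left]
  have h2 : ⟪-α, -α⟫ = ⟪α, α⟫ := by simp [inner_neg_left, inner_neg_right]
  rw [h1, h2, smul_neg]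
  rw [show 2 * -⟪α, x⟫ / ⟪α, α⟫ = -(2 * ⟪α, x⟫ / ⟪α, α⟫) by ring]
  rw [neg_smul, neg_neg]

lemma linEquiv_image_eq {S : Set V} (hS : S.Finite) (e : V ≃ₗ[ℝ] V) (h : ⇑e '' S ⊆ S) :
    ⇑e '' S = S :=
  Set.eq_of_subset_of_ncard_le h
    (le_of_eq (Set.ncard_image_of_injective S e.injective).symm) hS

lemma longest_isLongest {H : Subgroup (V ≃ₗ[ℝ] V)} {P : Set V}
    (h : ∃ w, IsLongest H P w) : IsLongest H P (longest H P) := by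
  rw [longest, dif_pos h]
  exact h.choose_spec

lemma longest_mem (H : Subgroup (V ≃ₗ[ℝ] V)) (P : Set V) : longest H P ∈ H := by
  rw [longest]
  split_ifs with h
  exacts [h.choose_spec.1, H.one_mem]

lemma conj_rootRefl {g : V ≃ₗ[ℝ] V} (hg : ∀ x y, ⟪g x, g y⟫ = ⟪x, y⟫) (α : V) :
    g * rootRefl α * g⁻¹ = rootRefl (g α) := by
  apply LinearEquiv.toLinearMap_injective
  apply LinearMap.ext
  intro x
  show g (rootRefl α (g⁻¹ x)) = rootRefl (g α) x
  rw [rootRefl_apply, rootRefl_apply, map_sub, map_smul]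
  have h1 : g (g⁻¹ x) = x := by
    show (g * g⁻¹) x = x
    rw [mul_inv_cancel]; rfl
  have h2 : ⟪g α, g α⟫ = ⟪α, α⟫ := hg α α
  have h3 : ⟪g α, x⟫ = ⟪α, g⁻¹ x⟫ := by
    conv_lhs => rw [← h1]
    exact hg α (g⁻¹ x)
  rw [h1, h2, h3]

end CorAux

section PartB

variable {V : Type*} [NormedAddCommGroup V] [InnerProductSpace ℝ V] [FiniteDimensional ℝ V]
variable {R : RootData V}

namespace CorAux

attribute [local instance] Classical.propDecidable

lemma roots_finite (hR : R.IsRootSystem) : R.roots.Finite := hR.finite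
lemma pos_sub_roots (hR : R.IsRootSystem) : R.pos ⊆ R.roots := hR.pos_subset
lemma base_sub_pos (hR : R.IsRootSystem) : R.base ⊆ R.pos := hR.base_subset
lemma base_sub_roots (hR : R.IsRootSystem) : R.base ⊆ R.roots :=
  fun _ h => hR.pos_subset (hR.base_subset h)

lemma root_ne_zero (hR : R.IsRootSystem) {β : V} (h : β ∈ R.roots) : β ≠ 0 :=
  fun e => hR.zero_not_mem (e ▸ h)

lemma neg_mem_roots (hR : R.IsRootSystem) {β : V} (h : β ∈ R.roots) : -β ∈ R.roots := by
  have := hR.reflect_mem β h β h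
  rwa [rootRefl_self] at this

lemma neg_not_pos (hR : R.IsRootSystem) {β : V} (h : β ∈ R.pos) : -β ∉ R.pos :=
  (hR.pos_iff_neg_not_mem β (hR.pos_subset h)).mp h

lemma pos_or_neg (hR : R.IsRootSystem) {β : V} (h : β ∈ R.roots) :
    β ∈ R.pos ∨ (-β ∈ R.pos ∧ β ∉ R.pos) := by
  by_cases hb : β ∈ R.pos
  · exact Or.inl hb
  · refine Or.inr ⟨?_, hb⟩
    by_contra hn
    exact hb ((hR.pos_iff_neg_not_mem β h).mpr hn)

lemma pos_of_neg_not_pos (hR : R.IsRootSystem) {β : V} (h : β ∈ R.roots)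
    (hn : -β ∉ R.pos) : β ∈ R.pos :=
  (hR.pos_iff_neg_not_mem β h).mpr hn

lemma span_base_top (hR : R.IsRootSystem) : Submodule.span ℝ R.base = ⊤ := by
  have h1 : R.roots ⊆ (Submodule.span ℝ R.base : Set V) := by
    intro β hβ
    rcases pos_or_neg hR hβ with h | ⟨h, _⟩
    · have := hR.pos_mem_closure β h
      have hle : AddSubmonoid.closure R.base ≤ (Submodule.span ℝ R.base).toAddSubmonoid :=
        AddSubmonoid.closure_le.mpr Submodule.subset_span
      exact hle this
    · have := hR.pos_mem_closure (-β) h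
      have hle : AddSubmonoid.closure R.base ≤ (Submodule.span ℝ R.base).toAddSubmonoid :=
        AddSubmonoid.closure_le.mpr Submodule.subset_span
      have h2 : -β ∈ Submodule.span ℝ R.base := hle this
      simpa using Submodule.neg_mem _ h2
  have := Submodule.span_le.mpr h1
  rw [hR.span_eq_top] at this
  exact top_le_iff.mp this

/-- The basis given by the simple roots. -/
noncomputable def bas (hR : R.IsRootSystem) : Module.Basis R.base ℝ V :=
  Module.Basis.mk hR.base_indep (by rw [Subtype.range_coe, span_base_top hR])

lemma bas_apply (hR : R.IsRootSystem) (θ : R.base) : bas hR θ = ↑θ := Module.Basis.mk_apply _ _ θ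

/-- The coordinate functionals with respect to the basis of simple roots. -/
noncomputable def coord (hR : R.IsRootSystem) (θ : R.base) : V →ₗ[ℝ] ℝ := (bas hR).coord θ

lemma coord_base (hR : R.IsRootSystem) (θ θ' : R.base) :
    coord hR θ ↑θ' = if θ' = θ then 1 else 0 := by
  rw [coord, ← bas_apply hR θ', Module.Basis.coord_apply, Module.Basis.repr_self]
  exact Finsupp.single_apply

lemma coord_base_self (hR : R.IsRootSystem) (θ : R.base) : coord hR θ ↑θ = 1 := by
  rw [coord_base]; simp

lemma coord_base_nonneg (hR : R.IsRootSystem) (θ : R.base) {x : V} (hx : x ∈ R.base) :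
    0 ≤ coord hR θ x := by
  have : coord hR θ ↑(⟨x, hx⟩ : R.base) = if (⟨x, hx⟩ : R.base) = θ then 1 else 0 :=
    coord_base hR θ _
  rw [this]
  split <;> norm_num

lemma eq_zero_of_coords (hR : R.IsRootSystem) {v : V} (h : ∀ θ, coord hR θ v = 0) :
    v = 0 := by
  have : (bas hR).repr v = 0 := by
    ext θ
    exact h θ
  have := congrArg (bas hR).repr.symm this
  simpa using this

lemma pos_list (hR : R.IsRootSystem) {β : V} (h : β ∈ R.pos) :
    ∃ l : List V, (∀ x ∈ l, x ∈ R.base) ∧ l.sum = β ∧ l ≠ [] := by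
  obtain ⟨l, h1, h2⟩ := AddSubmonoid.exists_list_of_mem_closure (hR.pos_mem_closure β h)
  refine ⟨l, h1, h2, ?_⟩
  rintro rfl
  exact root_ne_zero hR (hR.pos_subset h) h2.symm

lemma coord_list_sum (hR : R.IsRootSystem) (θ : R.base) (l : List V) :
    coord hR θ l.sum = (l.map (coord hR θ)).sum :=
  map_list_sum (coord hR θ) l

lemma coord_nonneg (hR : R.IsRootSystem) {β : V} (h : β ∈ R.pos) (θ : R.base) :
    0 ≤ coord hR θ β := by
  obtain ⟨l, h1, h2, _⟩ := pos_list hR h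
  rw [← h2, coord_list_sum]
  apply List.sum_nonneg
  intro x hx
  obtain ⟨y, hy, rfl⟩ := List.mem_map.mp hx
  exact coord_base_nonneg hR θ (h1 y hy)

lemma mem_pos_of_coord_pos (hR : R.IsRootSystem) {β : V} (hβ : β ∈ R.roots)
    {θ : R.base} (h : 0 < coord hR θ β) : β ∈ R.pos := by
  rcases pos_or_neg hR hβ with h' | ⟨h', _⟩
  · exact h'
  · have := coord_nonneg hR h' θ
    rw [map_neg] at this
    linarith

lemma not_pos_of_coord_neg (hR : R.IsRootSystem) {β : V}
    {θ : R.base} (h : coord hR θ β < 0) : β ∉ R.pos := by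
  intro hb
  have := coord_nonneg hR hb θ
  linarith

lemma exists_coord_pos (hR : R.IsRootSystem) {β : V} (h : β ∈ R.pos) :
    ∃ θ : R.base, 0 < coord hR θ β := by
  by_contra hc
  push_neg at hc
  have : ∀ θ, coord hR θ β = 0 := fun θ => le_antisymm (hc θ) (coord_nonneg hR h θ)
  exact root_ne_zero hR (hR.pos_subset h) (eq_zero_of_coords hR this)

lemma coord_zero_of_span (hR : R.IsRootSystem) {S : Set V} (hS : S ⊆ R.base) {v : V}
    (hv : v ∈ Submodule.span ℝ S) {θ : R.base} (hθ : (θ : V) ∉ S) : coord hR θ v = 0 := by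
  induction hv using Submodule.span_induction with
  | mem x hx =>
    have hxb : x ∈ R.base := hS hx
    have heq : coord hR θ ↑(⟨x, hxb⟩ : R.base) = if (⟨x, hxb⟩ : R.base) = θ then 1 else 0 :=
      coord_base hR θ _
    rw [show x = ↑(⟨x, hxb⟩ : R.base) from rfl, heq, if_neg]
    rintro rfl
    exact hθ hx
  | zero => simp
  | add x y _ _ hx hy => rw [map_add, hx, hy, add_zero]
  | smul c x _ hx => rw [map_smul, hx, smul_zero]

lemma mem_span_of_coords (hR : R.IsRootSystem) {T : Set V} (v : V)
    (h : ∀ θ : R.base, coord hR θ v ≠ 0 → (θ : V) ∈ T) : v ∈ Submodule.span ℝ T := by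
  have hv : v = Finsupp.linearCombination ℝ (⇑(bas hR)) ((bas hR).repr v) :=
    ((bas hR).linearCombination_repr v).symm
  rw [hv, Finsupp.linearCombination_apply, Finsupp.sum]
  apply Submodule.sum_mem
  intro θ hθ
  have h1 : coord hR θ v ≠ 0 := by
    simpa [coord, Module.Basis.coord_apply] using Finsupp.mem_support_iff.mp hθ
  apply Submodule.smul_mem
  rw [bas_apply]
  exact Submodule.subset_span (h θ h1)

lemma eq_smul_of_coords (hR : R.IsRootSystem) (v : V) (θ0 : R.base)
    (h : ∀ θ, θ ≠ θ0 → coord hR θ v = 0) : v = coord hR θ0 v • (θ0 : V) := by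
  have hv : v = Finsupp.linearCombination ℝ (⇑(bas hR)) ((bas hR).repr v) :=
    ((bas hR).linearCombination_repr v).symm
  have hrepr : (bas hR).repr v = Finsupp.single θ0 ((bas hR).repr v θ0) := by
    ext θ
    rcases eq_or_ne θ θ0 with rfl | hne
    · simp
    · rw [Finsupp.single_apply, if_neg (by exact fun e => hne e.symm)]
      exact h θ hne
  conv_lhs => rw [hv, hrepr]
  rw [Finsupp.linearCombination_single, bas_apply]
  rfl

end CorAux

end PartB

section PartC

variable {V : Type*} [NormedAddCommGroup V] [InnerProductSpace ℝ V] [FiniteDimensional ℝ V]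
variable {R : RootData V}

namespace CorAux

attribute [local instance] Classical.propDecidable

lemma mulApply (e f : V ≃ₗ[ℝ] V) (x : V) : (e * f) x = e (f x) := rfl

lemma oneApply (x : V) : (1 : V ≃ₗ[ℝ] V) x = x := rfl

lemma refl_prod_inv (l : List V) :
    ((l.map rootRefl).prod)⁻¹ = (l.reverse.map rootRefl).prod := by
  rw [List.prod_inv_reverse, List.map_map]
  have h1 : List.map (Inv.inv ∘ rootRefl) l = List.map rootRefl l := by
    apply List.map_congr_left
    intro β _
    exact rootRefl_inv β
  rw [h1, show (List.map rootRefl l).reverse = List.map rootRefl l.reverse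
    from List.map_reverse.symm]

lemma exists_rootList {S : Set V} {x : V ≃ₗ[ℝ] V}
    (h : x ∈ Subgroup.closure {g | ∃ α ∈ S, g = rootRefl α}) :
    ∃ l : List V, (∀ β ∈ l, β ∈ S) ∧ x = (l.map rootRefl).prod := by
  have h' : x ∈ Submonoid.closure
      ({g | ∃ α ∈ S, g = rootRefl α} ∪ {g | ∃ α ∈ S, g = rootRefl α}⁻¹) := by
    rw [← Subgroup.closure_toSubmonoid]
    exact h
  obtain ⟨l, hl, hprod⟩ := Submonoid.exists_list_of_mem_closure h'
  subst hprod
  clear h h'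
  induction l with
  | nil => exact ⟨[], by simp, by simp⟩
  | cons a t ih =>
    obtain ⟨m, hm, hp⟩ := ih (fun y hy => hl y (List.mem_cons_of_mem _ hy))
    have ha := hl a (List.mem_cons_self)
    have haS : ∃ α ∈ S, a = rootRefl α := by
      rcases ha with h | h
      · exact h
      · rw [Set.mem_inv] at h
        obtain ⟨α, hα, he⟩ := h
        exact ⟨α, hα, by rw [← inv_inv a, he, rootRefl_inv]⟩
    obtain ⟨α, hα, rfl⟩ := haS
    refine ⟨α :: m, ?_, ?_⟩
    · intro β hβ
      rcases List.mem_cons.mp hβ with rfl | hβ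
      · exact hα
      · exact hm β hβ
    · rw [List.map_cons, List.prod_cons, List.prod_cons, hp]

lemma listProd_inner (l : List V) (x y : V) :
    ⟪((l.map rootRefl).prod) x, ((l.map rootRefl).prod) y⟫ = ⟪x, y⟫ := by
  induction l generalizing x y with
  | nil => simp
  | cons a t ih =>
    rw [List.map_cons, List.prod_cons, mulApply, mulApply,
      rootRefl_inner]
    exact ih x y

lemma reflClosure_inner {S : Set V} {g : V ≃ₗ[ℝ] V}
    (h : g ∈ Subgroup.closure {g | ∃ α ∈ S, g = rootRefl α}) (x y : V) :
    ⟪g x, g y⟫ = ⟪x, y⟫ := by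
  obtain ⟨l, _, rfl⟩ := exists_rootList h
  exact listProd_inner l x y

lemma listProd_root (hR : R.IsRootSystem) (l : List V) (hl : ∀ y ∈ l, y ∈ R.roots) :
    ∀ β ∈ R.roots, ((l.map rootRefl).prod) β ∈ R.roots := by
  induction l with
  | nil => intro β hβ; simpa using hβ
  | cons a t ih =>
    intro β hβ
    rw [List.map_cons, List.prod_cons, mulApply]
    have h1 : ((t.map rootRefl).prod) β ∈ R.roots :=
      ih (fun y hy => hl y (List.mem_cons_of_mem _ hy)) β hβ
    exact hR.reflect_mem a (hl a (List.mem_cons_self)) _ h1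

lemma reflClosure_root (hR : R.IsRootSystem) {S : Set V} (hS : S ⊆ R.roots) {g : V ≃ₗ[ℝ] V}
    (h : g ∈ Subgroup.closure {g | ∃ α ∈ S, g = rootRefl α}) {β : V} (hβ : β ∈ R.roots) :
    g β ∈ R.roots := by
  obtain ⟨l, hl, rfl⟩ := exists_rootList h
  exact listProd_root hR l (fun y hy => hS (hl y hy)) β hβ

lemma listProd_memL {L : Submodule ℝ V} (l : List V) (hl : ∀ y ∈ l, y ∈ L) :
    ∀ v ∈ L, ((l.map rootRefl).prod) v ∈ L := by
  induction l with
  | nil => intro v hv; simpa using hv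
  | cons a t ih =>
    intro v hv
    rw [List.map_cons, List.prod_cons, mulApply]
    have h1 : ((t.map rootRefl).prod) v ∈ L :=
      ih (fun y hy => hl y (List.mem_cons_of_mem _ hy)) v hv
    rw [rootRefl_apply]
    exact Submodule.sub_mem _ h1 (Submodule.smul_mem _ _ (hl a (List.mem_cons_self)))

lemma reflClosure_memL {L : Submodule ℝ V} {S : Set V} (hS : S ⊆ (L : Set V)) {g : V ≃ₗ[ℝ] V}
    (h : g ∈ Subgroup.closure {g | ∃ α ∈ S, g = rootRefl α}) {v : V} (hv : v ∈ L) :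
    g v ∈ L := by
  obtain ⟨l, hl, rfl⟩ := exists_rootList h
  exact listProd_memL l (fun y hy => hS (hl y hy)) v hv

lemma reflClosure_not_memL {L : Submodule ℝ V} {S : Set V} (hS : S ⊆ (L : Set V))
    {g : V ≃ₗ[ℝ] V} (hg : g ∈ Subgroup.closure {g | ∃ α ∈ S, g = rootRefl α}) {v : V}
    (hv : v ∉ L) : g v ∉ L := by
  intro hc
  have hinv := reflClosure_memL hS (Subgroup.inv_mem _ hg) hc
  have : g⁻¹ (g v) = v := by
    show (g⁻¹ * g) v = v
    rw [inv_mul_cancel]; rfl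
  rw [this] at hinv
  exact hv hinv

/-- S1: a simple reflection permutes the positive roots other than the simple root itself. -/
lemma simple_refl_pos (hR : R.IsRootSystem) {θ : V} (hθ : θ ∈ R.base) {β : V}
    (hβ : β ∈ R.pos) (hne : β ≠ θ) : rootRefl θ β ∈ R.pos ∧ rootRefl θ β ≠ θ := by
  have hβr : β ∈ R.roots := hR.pos_subset hβ
  have hθr : θ ∈ R.roots := base_sub_roots hR hθ
  have hroot : rootRefl θ β ∈ R.roots := hR.reflect_mem θ hθr β hβr
  have hneθ : rootRefl θ β ≠ θ := by
    intro he
    have h2 : rootRefl θ (rootRefl θ β) = rootRefl θ θ := by rw [he]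
    rw [rootRefl_rootRefl, rootRefl_self] at h2
    subst h2
    exact (neg_not_pos hR (base_sub_pos hR hθ)) hβ
  refine ⟨?_, hneθ⟩
  set θi : R.base := ⟨θ, hθ⟩ with hθi
  by_cases hA : ∃ θ' : R.base, θ' ≠ θi ∧ 0 < coord hR θ' β
  · obtain ⟨θ', hθ'ne, hθ'pos⟩ := hA
    apply mem_pos_of_coord_pos hR hroot (θ := θ')
    rw [rootRefl_apply, map_sub, map_smul]
    have hcθ : coord hR θ' θ = 0 := by
      have heq : coord hR θ' ↑θi = if θi = θ' then 1 else 0 := coord_base hR θ' θi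
      rw [show θ = ↑θi from rfl, heq, if_neg (fun e => hθ'ne e.symm)]
    rw [hcθ]
    simpa using hθ'pos
  · push_neg at hA
    have hzero : ∀ θ' : R.base, θ' ≠ θi → coord hR θ' β = 0 := by
      intro θ' h'
      exact le_antisymm (hA θ' h') (coord_nonneg hR hβ θ')
    have hβθ : β = coord hR θi β • θ := eq_smul_of_coords hR β θi hzero
    have := hR.reduced θ hθr (coord hR θi β) (by rw [← hβθ]; exact hβr)
    rcases this with h1 | h1
    · rw [h1, one_smul] at hβθ
      exact absurd hβθ hne
    · rw [h1] at hβθ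
      rw [neg_one_smul] at hβθ
      subst hβθ
      exact absurd hβ (neg_not_pos hR (base_sub_pos hR hθ))

end CorAux

end PartC

section PartD

variable {V : Type*} [NormedAddCommGroup V] [InnerProductSpace ℝ V] [FiniteDimensional ℝ V]
variable {R : RootData V}

namespace CorAux

attribute [local instance] Classical.propDecidable

/-- The sum-of-coordinates functional. -/
noncomputable def psiAll (hR : R.IsRootSystem) : V →ₗ[ℝ] ℝ :=
  (bas hR).constr ℝ (fun _ => (1 : ℝ))

lemma psiAll_base (hR : R.IsRootSystem) {x : V} (hx : x ∈ R.base) : psiAll hR x = 1 := by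
  have : psiAll hR ((bas hR) ⟨x, hx⟩) = 1 := Module.Basis.constr_basis _ _ _ _
  rwa [bas_apply] at this

lemma inner_self_pos' {x : V} (hx : x ≠ 0) : 0 < ⟪x, x⟫ :=
  lt_of_le_of_ne real_inner_self_nonneg (fun h => hx (inner_self_eq_zero.mp h.symm))

lemma list_sum_nonpos {l : List ℝ} (h : ∀ x ∈ l, x ≤ 0) : l.sum ≤ 0 := by
  induction l with
  | nil => simp
  | cons a t ih =>
    rw [List.sum_cons]
    have := h a (List.mem_cons_self)
    have := ih (fun x hx => h x (List.mem_cons_of_mem _ hx))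
    linarith

lemma map_list_sum' (f : V →ₗ[ℝ] ℝ) (l : List V) : f l.sum = (l.map f).sum :=
  map_list_sum f l

lemma psiAll_listsum (hR : R.IsRootSystem) {l : List V} (hl : ∀ x ∈ l, x ∈ R.base) :
    psiAll hR l.sum = l.length := by
  rw [map_list_sum']
  induction l with
  | nil => simp
  | cons a t ih =>
    rw [List.map_cons, List.sum_cons, ih (fun x hx => hl x (List.mem_cons_of_mem _ hx)),
      psiAll_base hR (hl a (List.mem_cons_self)), List.length_cons]
    push_cast
    ring

lemma inner_listSum (β : V) (l : List V) : ⟪β, l.sum⟫ = (l.map (fun x => ⟪β, x⟫)).sum := by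
  induction l with
  | nil => simp
  | cons a t ih => rw [List.sum_cons, List.map_cons, List.sum_cons, inner_add_right, ih]

lemma exists_inner_pos (hR : R.IsRootSystem) {β : V} (hβ : β ∈ R.pos) {l : List V}
    (hsum : l.sum = β) : ∃ x ∈ l, 0 < ⟪β, x⟫ := by
  by_contra hc
  push_neg at hc
  have h1 : 0 < ⟪β, β⟫ := inner_self_pos' (root_ne_zero hR (hR.pos_subset hβ))
  have h2 : ⟪β, l.sum⟫ ≤ 0 := by
    rw [inner_listSum]
    apply list_sum_nonpos
    intro x hx
    obtain ⟨y, hy, rfl⟩ := List.mem_map.mp hx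
    exact hc y hy
  rw [hsum] at h2
  linarith

lemma toSimple (hR : R.IsRootSystem) (n : ℕ) :
    ∀ β ∈ R.pos, ∀ l : List V, (∀ x ∈ l, x ∈ R.base) → l.sum = β → l.length = n →
    ∃ m : List V, (∀ θ ∈ m, θ ∈ R.base) ∧ ((m.map rootRefl).prod) β ∈ R.base := by
  induction n using Nat.strong_induction_on with
  | _ n ih =>
  intro β hβ l hl hsum hlen
  by_cases hb : β ∈ R.base
  · exact ⟨[], by simp, by simpa [oneApply] using hb⟩
  · obtain ⟨θ, hθl, hip⟩ := exists_inner_pos hR hβ hsum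
    have hθb : θ ∈ R.base := hl θ hθl
    have hθ0 : θ ≠ 0 := root_ne_zero hR (base_sub_roots hR hθb)
    have hθθ : 0 < ⟪θ, θ⟫ := inner_self_pos' hθ0
    have hneθ : β ≠ θ := fun e => hb (e ▸ hθb)
    have hγpos := (simple_refl_pos hR hθb hβ hneθ).1
    set γ := rootRefl θ β with hγ
    obtain ⟨l', hl', hsum', _⟩ := pos_list hR hγpos
    -- height decrease
    have hψβ : psiAll hR β = n := by rw [← hsum, psiAll_listsum hR hl, hlen]
    have hψγ : psiAll hR γ = (l'.length : ℝ) := by rw [← hsum', psiAll_listsum hR hl']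
    have hψγ' : psiAll hR γ = (n : ℝ) - 2 * ⟪θ, β⟫ / ⟪θ, θ⟫ := by
      rw [hγ, rootRefl_apply, map_sub, map_smul, hψβ, psiAll_base hR hθb]
      simp [real_inner_comm]
    have hc : 0 < 2 * ⟪θ, β⟫ / ⟪θ, θ⟫ := by
      apply div_pos _ hθθ
      rw [real_inner_comm] at hip
      linarith
    have hlt : l'.length < n := by
      have : (l'.length : ℝ) < n := by rw [← hψγ, hψγ']; linarith
      exact_mod_cast this
    obtain ⟨m, hm, hmem⟩ := ih l'.length hlt γ hγpos l' hl' hsum' rfl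
    refine ⟨m ++ [θ], ?_, ?_⟩
    · intro x hx
      rcases List.mem_append.mp hx with h | h
      · exact hm x h
      · rw [List.mem_singleton.mp h]; exact hθb
    · rw [List.map_append, List.prod_append]
      simpa [mulApply] using hmem

lemma weyl_word (hR : R.IsRootSystem) {g : V ≃ₗ[ℝ] V} (hg : g ∈ R.weylGroup) :
    ∃ l : List V, (∀ θ ∈ l, θ ∈ R.base) ∧ g = (l.map rootRefl).prod := by
  set SW : Subgroup (V ≃ₗ[ℝ] V) :=
    { carrier := {g | ∃ l : List V, (∀ θ ∈ l, θ ∈ R.base) ∧ g = (l.map rootRefl).prod}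
      one_mem' := ⟨[], by simp, by simp⟩
      mul_mem' := by
        rintro a b ⟨l1, hl1, rfl⟩ ⟨l2, hl2, rfl⟩
        refine ⟨l1 ++ l2, ?_, by rw [List.map_append, List.prod_append]⟩
        intro θ hθ
        rcases List.mem_append.mp hθ with h | h
        exacts [hl1 θ h, hl2 θ h]
      inv_mem' := by
        rintro a ⟨l, hl, rfl⟩
        refine ⟨l.reverse, fun θ hθ => hl θ (List.mem_reverse.mp hθ), ?_⟩
        rw [refl_prod_inv] } with hSW
  suffices h : R.weylGroup ≤ SW from h hg
  rw [RootData.weylGroup, Subgroup.closure_le]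
  rintro g ⟨β, hβ, rfl⟩
  have key : ∀ β ∈ R.pos, rootRefl β ∈ SW := by
    intro β hβp
    obtain ⟨l, hl, hsum, _⟩ := pos_list hR hβp
    obtain ⟨m, hm, hmem⟩ := toSimple hR l.length β hβp l hl hsum rfl
    set u := (m.map rootRefl).prod with hu
    set θ := u β with hθ
    have hconj : u * rootRefl β * u⁻¹ = rootRefl θ := conj_rootRefl (listProd_inner m) β
    have hrw : rootRefl β = u⁻¹ * rootRefl θ * u := by
      rw [← hconj]
      group
    rw [hrw]
    have huSW : u ∈ SW := ⟨m, hm, rfl⟩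
    exact SW.mul_mem (SW.mul_mem (SW.inv_mem huSW) ⟨[θ], by simpa using hmem, by simp⟩) huSW
  rcases pos_or_neg hR hβ with h | ⟨h, _⟩
  · exact key β h
  · rw [← rootRefl_neg]
    exact key (-β) h

lemma eq_simple_of_refl_neg (hR : R.IsRootSystem) {θ : V} (hθ : θ ∈ R.base) {y : V}
    (hy : y ∈ R.pos) (h : rootRefl θ y ∉ R.pos) : y = θ := by
  by_contra hne
  exact h (simple_refl_pos hR hθ hy hne).1

lemma first_neg (hR : R.IsRootSystem) :
    ∀ m : List V, (∀ θ ∈ m, θ ∈ R.base) → ∀ x ∈ R.pos, ((m.map rootRefl).prod) x ∉ R.pos →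
    ∃ m₁ θ m₂, m = m₁ ++ θ :: m₂ ∧ (((m₂.map rootRefl).prod) x ∈ R.pos) ∧
      rootRefl θ (((m₂.map rootRefl).prod) x) ∉ R.pos := by
  intro m
  induction m with
  | nil =>
    intro _ x hx hnx
    exact absurd (by simpa [oneApply] using hx) hnx
  | cons a t ih =>
    intro hm x hx hnx
    rw [List.map_cons, List.prod_cons] at hnx
    by_cases hy : ((t.map rootRefl).prod) x ∈ R.pos
    · exact ⟨[], a, t, rfl, hy, by rwa [mulApply] at hnx⟩
    · obtain ⟨m₁, θ, m₂, heq, h1, h2⟩ := ih (fun θ hθ => hm θ (List.mem_cons_of_mem _ hθ)) x hx hy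
      exact ⟨a :: m₁, θ, m₂, by rw [heq]; rfl, h1, h2⟩

lemma prod_pos_eq_one (hR : R.IsRootSystem) (n : ℕ) :
    ∀ l : List V, l.length = n → (∀ θ ∈ l, θ ∈ R.base) →
    (∀ β ∈ R.pos, ((l.map rootRefl).prod) β ∈ R.pos) → (l.map rootRefl).prod = 1 := by
  induction n using Nat.strong_induction_on with
  | _ n ih =>
  intro l hlen hl hpres
  rcases List.eq_nil_or_concat l with rfl | ⟨l₀, θk, rfl⟩
  · simp
  rw [List.concat_eq_append] at *
  have hθk : θk ∈ R.base := hl θk (by simp)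
  have hθkp : θk ∈ R.pos := base_sub_pos hR hθk
  have hl₀ : ∀ θ ∈ l₀, θ ∈ R.base := fun θ hθ => hl θ (by simp [hθ])
  set v := (l₀.map rootRefl).prod with hv
  have hgprod : ((l₀ ++ [θk]).map rootRefl).prod = v * rootRefl θk := by
    rw [List.map_append, List.prod_append]
    simp
    exact hv.symm
  by_cases hvk : v θk ∈ R.pos
  · exfalso
    have h1 := hpres θk hθkp
    rw [hgprod, mulApply, rootRefl_self, map_neg] at h1
    exact (neg_not_pos hR hvk) h1
  · obtain ⟨m₁, θi, m₂, heq, h1, h2⟩ := first_neg hR l₀ hl₀ θk hθkp hvk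
    have hθi : θi ∈ R.base := hl₀ θi (by rw [heq]; simp)
    have hm₁ : ∀ θ ∈ m₁, θ ∈ R.base := fun θ hθ => hl₀ θ (by rw [heq]; simp [hθ])
    have hm₂ : ∀ θ ∈ m₂, θ ∈ R.base := fun θ hθ => hl₀ θ (by rw [heq]; simp [hθ])
    set u := (m₂.map rootRefl).prod with hu
    have hy : u θk = θi := eq_simple_of_refl_neg hR hθi h1 h2
    have hconj : u * rootRefl θk * u⁻¹ = rootRefl θi := by
      rw [conj_rootRefl (listProd_inner m₂) θk, hy]
    have hswap : rootRefl θi * u = u * rootRefl θk := by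
      rw [← hconj]
      group
    have hkey : rootRefl θi * (u * rootRefl θk) = u := by
      rw [← hswap, ← mul_assoc, rootRefl_mul_self, one_mul]
    have hsplit : l₀ ++ [θk] = m₁ ++ θi :: (m₂ ++ [θk]) := by rw [heq]; simp
    have hprodeq : ((l₀ ++ [θk]).map rootRefl).prod = ((m₁ ++ m₂).map rootRefl).prod := by
      rw [hsplit]
      simp only [List.map_append, List.map_cons, List.prod_append, List.prod_cons,
        List.map_nil, List.prod_nil, mul_one]
      rw [← hu, hkey]
    have hlt : (m₁ ++ m₂).length < n := by
      have : l₀.length + 1 = n := by simpa using hlen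
      have h3 : m₁.length + m₂.length + 1 = l₀.length := by
        rw [heq]
        simp [List.length_append]
        omega
      simp only [List.length_append]
      omega
    rw [hprodeq]
    apply ih _ hlt (m₁ ++ m₂) rfl
    · intro θ hθ
      rcases List.mem_append.mp hθ with h | h
      exacts [hm₁ θ h, hm₂ θ h]
    · intro β hβ
      rw [← hprodeq]
      exact hpres β hβ

lemma eq_one_of_pos_preserved (hR : R.IsRootSystem) {g : V ≃ₗ[ℝ] V} (hg : g ∈ R.weylGroup)
    (h : ∀ β ∈ R.pos, g β ∈ R.pos) : g = 1 := by
  obtain ⟨l, hl, rfl⟩ := weyl_word hR hg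
  exact prod_pos_eq_one hR l.length l rfl hl h

end CorAux

end PartD

section PartE1

variable {V : Type*} [NormedAddCommGroup V] [InnerProductSpace ℝ V] [FiniteDimensional ℝ V]
variable {R : RootData V}

namespace CorAux

attribute [local instance] Classical.propDecidable

lemma icomm (x y : V) : ⟪x, y⟫ = ⟪y, x⟫ := real_inner_comm y x

lemma pairing_int (hR : R.IsRootSystem) {α β : V} (hα : α ∈ R.roots) (hβ : β ∈ R.roots) :
    ∃ z : ℤ, (z : ℝ) = 2 * ⟪α, β⟫ / ⟪β, β⟫ := by
  obtain ⟨z, hz⟩ := hR.crystallographic β hβ α hα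
  refine ⟨z, ?_⟩
  rw [hz, coroot, real_inner_smul_right]
  ring

lemma strictCS (hR : R.IsRootSystem) {β γ : V} (hβ : β ∈ R.roots) (hγ : γ ∈ R.roots)
    (h1 : β ≠ γ) (h2 : β ≠ -γ) : ⟪β, γ⟫ * ⟪β, γ⟫ < ⟪β, β⟫ * ⟪γ, γ⟫ := by
  have hγ0 : γ ≠ 0 := root_ne_zero hR hγ
  have hγγ : 0 < ⟪γ, γ⟫ := inner_self_pos' hγ0
  set t := ⟪β, γ⟫ / ⟪γ, γ⟫ with ht
  have hx : β - t • γ ≠ 0 := by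
    intro h
    have hβt : β = t • γ := by rwa [sub_eq_zero] at h
    rcases hR.reduced γ hγ t (by rw [← hβt]; exact hβ) with h' | h'
    · rw [h', one_smul] at hβt; exact h1 hβt
    · rw [h', neg_one_smul] at hβt; exact h2 hβt
  have hpos : 0 < ⟪β - t • γ, β - t • γ⟫ := inner_self_pos' hx
  have hexp : ⟪β - t • γ, β - t • γ⟫
      = ⟪β, β⟫ - 2 * t * ⟪β, γ⟫ + t * t * ⟪γ, γ⟫ := by
    simp only [inner_sub_left, inner_sub_right, real_inner_smul_left, real_inner_smul_right]
    rw [icomm γ β]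
    ring
  rw [hexp] at hpos
  have htm : t * ⟪γ, γ⟫ = ⟪β, γ⟫ := div_mul_cancel₀ _ (ne_of_gt hγγ)
  nlinarith [mul_pos hpos hγγ, htm, hγγ]

lemma rootRefl_apply_int (hR : R.IsRootSystem) {γ β : V} {z : ℤ}
    (hz : (z : ℝ) = 2 * ⟪β, γ⟫ / ⟪γ, γ⟫) :
    rootRefl γ β = β - (z : ℝ) • γ := by
  rw [rootRefl_apply, hz, real_inner_comm γ β]

lemma root_sub_mem (hR : R.IsRootSystem) {β γ : V} (hβ : β ∈ R.roots) (hγ : γ ∈ R.roots)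
    (hip : 0 < ⟪β, γ⟫) (h1 : β ≠ γ) (h2 : β ≠ -γ) : β - γ ∈ R.roots := by
  have hγγ : 0 < ⟪γ, γ⟫ := inner_self_pos' (root_ne_zero hR hγ)
  have hββ : 0 < ⟪β, β⟫ := inner_self_pos' (root_ne_zero hR hβ)
  obtain ⟨z, hz⟩ := pairing_int hR hβ hγ
  obtain ⟨z2, hz2⟩ := pairing_int hR hγ hβ
  have hzpos : 0 < z := by
    have : (0 : ℝ) < (z : ℝ) := by rw [hz]; positivity
    exact_mod_cast this
  have hz2pos : 0 < z2 := by
    have : (0 : ℝ) < (z2 : ℝ) := by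
      rw [hz2, icomm γ β]; positivity
    exact_mod_cast this
  have hzz : z * z2 < 4 := by
    have hcs := strictCS hR hβ hγ h1 h2
    have : ((z * z2 : ℤ) : ℝ) < 4 := by
      push_cast
      rw [hz, hz2, icomm γ β]
      rw [div_mul_div_comm, div_lt_iff₀ (by positivity)]
      nlinarith
    exact_mod_cast this
  by_cases hz1 : z = 1
  · have := rootRefl_apply_int hR (γ := γ) (β := β) (hz1 ▸ hz)
    rw [Int.cast_one, one_smul] at this
    have h3 := hR.reflect_mem γ hγ β hβ
    rwa [this] at h3
  · have hz21 : z2 = 1 := by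
      have h4 : 2 ≤ z := by omega
      by_contra hne
      have h5 : 2 ≤ z2 := by omega
      nlinarith
    have := rootRefl_apply_int hR (γ := β) (β := γ) (hz21 ▸ hz2)
    rw [Int.cast_one, one_smul] at this
    have h3 := hR.reflect_mem β hβ γ hγ
    rw [this] at h3
    have := neg_mem_roots hR h3
    rwa [neg_sub] at this

end CorAux

end PartE1

section PartE2

variable {V : Type*} [NormedAddCommGroup V] [InnerProductSpace ℝ V] [FiniteDimensional ℝ V]
variable {R : RootData V}

namespace CorAux

attribute [local instance] Classical.propDecidable

lemma baseOf_refl (hR : R.IsRootSystem) (L : Submodule ℝ V) {γ : V}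
    (hγ : γ ∈ baseOf (R.pos ∩ (L : Set V))) {β : V}
    (hβ : β ∈ R.pos ∩ (L : Set V)) (hne : β ≠ γ) :
    rootRefl γ β ∈ R.pos ∩ (L : Set V) ∧ rootRefl γ β ≠ γ := by
  obtain ⟨⟨hγp, hγL⟩, hγind⟩ := hγ
  obtain ⟨hβp, hβL⟩ := hβ
  have hγr : γ ∈ R.roots := hR.pos_subset hγp
  have hβr : β ∈ R.roots := hR.pos_subset hβp
  have hγγ : 0 < ⟪γ, γ⟫ := inner_self_pos' (root_ne_zero hR hγr)
  have hββ : 0 < ⟪β, β⟫ := inner_self_pos' (root_ne_zero hR hβr)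
  have hroot : rootRefl γ β ∈ R.roots := hR.reflect_mem γ hγr β hβr
  have hLr : rootRefl γ β ∈ L := by
    rw [rootRefl_apply]
    exact Submodule.sub_mem _ hβL (Submodule.smul_mem _ _ hγL)
  have hneγ : rootRefl γ β ≠ γ := by
    intro he
    have h2 : rootRefl γ (rootRefl γ β) = rootRefl γ γ := by rw [he]
    rw [rootRefl_rootRefl, rootRefl_self] at h2
    subst h2
    exact (neg_not_pos hR hγp) hβp
  refine ⟨⟨?_, hLr⟩, hneγ⟩
  by_contra hneg
  have hδp : -(rootRefl γ β) ∈ R.pos := by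
    rcases pos_or_neg hR hroot with h | ⟨h, _⟩
    · exact absurd h hneg
    · exact h
  set c : ℝ := 2 * ⟪γ, β⟫ / ⟪γ, γ⟫ with hc
  have hδeq : -(rootRefl γ β) = c • γ - β := by
    rw [rootRefl_apply, neg_sub]
  rw [hδeq] at hδp
  have hδL : c • γ - β ∈ L := Submodule.sub_mem _ (Submodule.smul_mem _ _ hγL) hβL
  have hδr : c • γ - β ∈ R.roots := hR.pos_subset hδp
  -- c > 0
  obtain ⟨θ0, hθ0⟩ := exists_coord_pos hR hγp
  have hcδ : coord hR θ0 (c • γ - β) = c * coord hR θ0 γ - coord hR θ0 β := by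
    rw [map_sub, map_smul]; rfl
  have hc0 : 0 ≤ c := by
    have h1 := coord_nonneg hR hδp θ0
    have h2 := coord_nonneg hR hβp θ0
    rw [hcδ] at h1
    nlinarith
  have hcne : c ≠ 0 := by
    intro h
    rw [h, zero_smul, zero_sub] at hδp
    exact (neg_not_pos hR hβp) hδp
  have hcpos : 0 < c := lt_of_le_of_ne hc0 (Ne.symm hcne)
  have hγβ : 0 < ⟪γ, β⟫ := by
    rw [hc] at hcpos
    nlinarith [mul_pos hcpos hγγ, div_mul_cancel₀ (2 * ⟪γ, β⟫) (ne_of_gt hγγ)]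
  have hβγ : 0 < ⟪β, γ⟫ := by rwa [icomm β γ]
  have hne2 : β ≠ -γ := by
    intro h
    rw [h] at hβp
    exact (neg_not_pos hR hγp) hβp
  obtain ⟨z, hz⟩ := pairing_int hR hβr hγr
  have hzc : (z : ℝ) = c := by rw [hz, hc, icomm β γ]
  have hzpos : 0 < z := by
    have : (0:ℝ) < (z:ℝ) := by rw [hzc]; exact hcpos
    exact_mod_cast this
  obtain ⟨z2, hz2⟩ := pairing_int hR hγr hβr
  have hz2pos : 0 < z2 := by
    have : (0:ℝ) < (z2:ℝ) := by rw [hz2]; positivity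
    exact_mod_cast this
  have hzz : z * z2 < 4 := by
    have hcs := strictCS hR hβr hγr hne hne2
    have : ((z * z2 : ℤ) : ℝ) < 4 := by
      push_cast
      rw [hz, hz2, icomm γ β]
      rw [div_mul_div_comm, div_lt_iff₀ (by positivity)]
      nlinarith
    exact_mod_cast this
  have hdec : ∀ a, a ∈ R.pos → a ∈ L → ∀ b, b ∈ R.pos → b ∈ L → γ = a + b → False := by
    intro a ha haL b hb hbL heq
    exact hγind ⟨a, ⟨ha, haL⟩, b, ⟨hb, hbL⟩, heq⟩
  by_cases hz1 : z = 1
  · -- c = 1 : γ = β + (γ - β)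
    have hc1 : c = 1 := by rw [← hzc, hz1, Int.cast_one]
    rw [hc1, one_smul] at hδp hδL
    exact hdec β hβp hβL (γ - β) hδp hδL (by abel)
  · have hz21 : z2 = 1 := by
      have h4 : 2 ≤ z := by omega
      by_contra hne'
      have h5 : 2 ≤ z2 := by omega
      nlinarith
    -- γ - β is a root
    have hγβroot : γ - β ∈ R.roots := by
      have := rootRefl_apply_int hR (γ := β) (β := γ) (hz21 ▸ hz2)
      rw [Int.cast_one, one_smul] at this
      have h3 := hR.reflect_mem β hβr γ hγr
      rwa [this] at h3
    rcases pos_or_neg hR hγβroot with hp | ⟨hp, hpn⟩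
    · exact hdec β hβp hβL (γ - β) hp (Submodule.sub_mem _ hγL hβL) (by abel)
    · rw [neg_sub] at hp
      have hεL : β - γ ∈ L := Submodule.sub_mem _ hβL hγL
      have hz3 : z = 2 ∨ z = 3 := by
        rcases lt_or_ge z 3 with h | h
        · left; omega
        · right; nlinarith
      -- inner product identities
      have hbb2 : ⟪β, β⟫ = 2 * ⟪γ, β⟫ := by
        have : (1 : ℝ) = 2 * ⟪γ, β⟫ / ⟪β, β⟫ := by rw [← hz2, hz21, Int.cast_one]
        field_simp at this
        linarith
      rcases hz3 with h2 | h3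
      · -- c = 2 : γ = (β - γ) + (2•γ - β)
        have hc2 : c = 2 := by rw [← hzc, h2]; norm_num
        rw [hc2] at hδp hδL
        exact hdec (β - γ) hp hεL ((2:ℝ) • γ - β) hδp hδL
          (by rw [two_smul]; abel)
      · -- z = 3
        have hc3 : c = 3 := by rw [← hzc, h3]; norm_num
        rw [hc3] at hδp hδL hδr
        have hgb : 2 * ⟪γ, β⟫ = 3 * ⟪γ, γ⟫ := by
          have : (3 : ℝ) = 2 * ⟪γ, β⟫ / ⟪γ, γ⟫ := by
            rw [← hc]
            exact hc3.symm
          field_simp at this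
          linarith [this]
        set δ : V := (3:ℝ) • γ - β with hδ
        have hδγ : ⟪δ, γ⟫ = 3 * ⟪γ, γ⟫ - ⟪β, γ⟫ := by
          rw [hδ, inner_sub_left, real_inner_smul_left]
        have hδδ : ⟪δ, δ⟫ = 9 * ⟪γ, γ⟫ - 6 * ⟪γ, β⟫ + ⟪β, β⟫ := by
          rw [hδ]
          simp only [inner_sub_left, inner_sub_right, real_inner_smul_left,
            real_inner_smul_right]
          rw [icomm β γ]
          ring
        have hδδ3 : ⟪δ, δ⟫ = 3 * ⟪γ, γ⟫ := by
          rw [hδδ, hbb2]; linarith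
        have hδγ3 : 2 * ⟪δ, γ⟫ = ⟪δ, δ⟫ := by
          rw [hδγ, hδδ3, icomm β γ]
          linarith
        have hδ0 : δ ≠ 0 := root_ne_zero hR hδr
        have hδδpos : 0 < ⟪δ, δ⟫ := inner_self_pos' hδ0
        have hsδγ : rootRefl δ γ = γ - δ := by
          rw [rootRefl_apply]
          have : 2 * ⟪δ, γ⟫ / ⟪δ, δ⟫ = 1 := by
            rw [hδγ3]
            field_simp
          rw [this, one_smul]
        have hγδroot : γ - δ ∈ R.roots := by
          have h3' := hR.reflect_mem δ hδr γ hγr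
          rwa [hsδγ] at h3'
        rcases pos_or_neg hR hγδroot with hp2 | ⟨hp2, _⟩
        · exact hdec (γ - δ) hp2 (Submodule.sub_mem _ hγL hδL) δ hδp hδL (by abel)
        · rw [neg_sub] at hp2
          exact hdec (δ - γ) hp2 (Submodule.sub_mem _ hδL hγL) (β - γ) hp hεL
            (by rw [hδ]; rw [show (3:ℝ) = 1 + 1 + 1 by norm_num, add_smul, add_smul, one_smul]; abel)

end CorAux

end PartE2

section PartE3

variable {V : Type*} [NormedAddCommGroup V] [InnerProductSpace ℝ V] [FiniteDimensional ℝ V]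
variable {R : RootData V}

namespace CorAux

attribute [local instance] Classical.propDecidable

lemma cone_list_aux (hR : R.IsRootSystem) (L : Submodule ℝ V) (n : ℕ) :
    ∀ β ∈ R.pos ∩ (L : Set V), ∀ l : List V, (∀ x ∈ l, x ∈ R.base) → l.sum = β →
    l.length = n →
    ∃ m : List V, (∀ x ∈ m, x ∈ baseOf (R.pos ∩ (L : Set V))) ∧ m.sum = β ∧ m ≠ [] := by
  induction n using Nat.strong_induction_on with
  | _ n ih =>
  intro β hβ l hl hsum hlen
  by_cases hind : ∃ a ∈ R.pos ∩ (L : Set V), ∃ b ∈ R.pos ∩ (L : Set V), β = a + b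
  · obtain ⟨a, ha, b, hb, heq⟩ := hind
    obtain ⟨la, hla, hsla, hnea⟩ := pos_list hR ha.1
    obtain ⟨lb, hlb, hslb, hneb⟩ := pos_list hR hb.1
    have hψ : (la.length : ℝ) + lb.length = n := by
      have h1 : psiAll hR β = n := by rw [← hsum, psiAll_listsum hR hl, hlen]
      have h2 : psiAll hR a = la.length := by rw [← hsla, psiAll_listsum hR hla]
      have h3 : psiAll hR b = lb.length := by rw [← hslb, psiAll_listsum hR hlb]
      rw [← h2, ← h3, ← map_add, ← heq, h1]
    have hlena : la.length < n := by
      have h4 : 1 ≤ lb.length := List.length_pos_iff.mpr hneb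
      have : (la.length : ℝ) < n := by
        have : (1 : ℝ) ≤ lb.length := by exact_mod_cast h4
        linarith
      exact_mod_cast this
    have hlenb : lb.length < n := by
      have h4 : 1 ≤ la.length := List.length_pos_iff.mpr hnea
      have : (lb.length : ℝ) < n := by
        have : (1 : ℝ) ≤ la.length := by exact_mod_cast h4
        linarith
      exact_mod_cast this
    obtain ⟨ma, hma, hsma, hmane⟩ := ih la.length hlena a ha la hla hsla rfl
    obtain ⟨mb, hmb, hsmb, _⟩ := ih lb.length hlenb b hb lb hlb hslb rfl
    refine ⟨ma ++ mb, ?_, ?_, ?_⟩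
    · intro x hx
      rcases List.mem_append.mp hx with h | h
      exacts [hma x h, hmb x h]
    · rw [List.sum_append, hsma, hsmb, heq]
    · simp [hmane]
  · exact ⟨[β], by intro x hx; rw [List.mem_singleton.mp hx]; exact ⟨hβ, hind⟩,
      by simp, by simp⟩

lemma cone_list (hR : R.IsRootSystem) (L : Submodule ℝ V) {β : V}
    (hβ : β ∈ R.pos ∩ (L : Set V)) :
    ∃ m : List V, (∀ x ∈ m, x ∈ baseOf (R.pos ∩ (L : Set V))) ∧ m.sum = β ∧ m ≠ [] := by
  obtain ⟨l, hl, hsum, _⟩ := pos_list hR hβ.1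
  exact cone_list_aux hR L l.length β hβ l hl hsum rfl

lemma isLongest_base {w : V ≃ₗ[ℝ] V} {P : Set V} (h : ⇑w '' P = (fun x => -x) '' P)
    {γ : V} (hγ : γ ∈ baseOf P) : -(w γ) ∈ baseOf P := by
  have hwinv : ∀ a ∈ P, ∃ pa ∈ P, w pa = -a := by
    intro a ha
    have : -a ∈ (fun x => -x) '' P := ⟨a, ha, rfl⟩
    rw [← h] at this
    exact this
  have h1 : -(w γ) ∈ P := by
    have h2 : w γ ∈ (fun x => -x) '' P := h ▸ ⟨γ, hγ.1, rfl⟩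
    obtain ⟨p, hp, he⟩ := h2
    rw [← he, neg_neg]
    exact hp
  refine ⟨h1, ?_⟩
  rintro ⟨a, ha, b, hb, heq⟩
  obtain ⟨pa, hpa, hwa⟩ := hwinv a ha
  obtain ⟨pb, hpb, hwb⟩ := hwinv b hb
  apply hγ.2
  refine ⟨pa, hpa, pb, hpb, ?_⟩
  apply w.injective
  rw [map_add, hwa, hwb]
  have h3 : w γ = -(a + b) := by rw [← heq, neg_neg]
  rw [h3]
  abel

lemma exists_isLongest (hR : R.IsRootSystem) (L : Submodule ℝ V)
    (H : Subgroup (V ≃ₗ[ℝ] V))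
    (hH : ∀ γ ∈ baseOf (R.pos ∩ (L : Set V)), rootRefl γ ∈ H) :
    ∃ w, IsLongest H (R.pos ∩ (L : Set V)) w := by
  set P := R.pos ∩ (L : Set V) with hP
  have hPfin : P.Finite := hR.finite.subset (fun x hx => hR.pos_subset hx.1)
  have hBsub : ∀ x ∈ baseOf P, x ∈ P := fun x hx => hx.1
  have main : ∀ n : ℕ, ∀ l : List V, (∀ γ ∈ l, γ ∈ baseOf P) →
      ((⇑((l.map rootRefl).prod) '' P) ∩ P).ncard = n → ∃ w, IsLongest H P w := by
    intro n
    induction n using Nat.strong_induction_on with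
    | _ n ih =>
    intro l hlB hn
    set w := (l.map rootRefl).prod with hw
    have hwH : w ∈ H := by
      apply Subgroup.list_prod_mem
      intro x hx
      obtain ⟨γ, hγ, rfl⟩ := List.mem_map.mp hx
      exact hH γ (hlB γ hγ)
    have hwroot : ∀ β ∈ R.roots, w β ∈ R.roots :=
      listProd_root hR l (fun y hy => hR.pos_subset (hlB y hy).1.1)
    have hwL : ∀ v ∈ L, w v ∈ L :=
      listProd_memL l (fun y hy => (hlB y hy).1.2)
    rcases Nat.eq_zero_or_pos n with rfl | hnpos
    · -- w is the longest element
      have hempty : (⇑w '' P) ∩ P = ∅ :=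
        (Set.ncard_eq_zero ((hPfin.image _).inter_of_left P)).mp hn
      refine ⟨w, hwH, ?_⟩
      have hsub : ⇑w '' P ⊆ (fun x => -x) '' P := by
        rintro x ⟨β, hβ, rfl⟩
        have hwβr : w β ∈ R.roots := hwroot β (hR.pos_subset hβ.1)
        have hwβL : w β ∈ L := hwL β hβ.2
        have hwβnp : w β ∉ R.pos := by
          intro hc
          have : w β ∈ (⇑w '' P) ∩ P := ⟨⟨β, hβ, rfl⟩, hc, hwβL⟩
          rw [hempty] at this
          exact this
        rcases pos_or_neg hR hwβr with hc | ⟨hc, _⟩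
        · exact absurd hc hwβnp
        · exact ⟨-(w β), ⟨hc, Submodule.neg_mem _ hwβL⟩, by simp⟩
      exact Set.eq_of_subset_of_ncard_le hsub
        (by rw [Set.ncard_image_of_injective P w.injective,
          Set.ncard_image_of_injective P neg_injective])
        (hPfin.image _)
    · -- find γ and recurse
      have hnonempty : ((⇑w '' P) ∩ P).Nonempty := by
        apply Set.nonempty_of_ncard_ne_zero
        omega
      obtain ⟨x, ⟨⟨β, hβP, rfl⟩, hwβP⟩⟩ := hnonempty
      have hexγ : ∃ γ ∈ baseOf P, w γ ∈ R.pos := by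
        by_contra hc
        push_neg at hc
        obtain ⟨m, hm, hsum, hmne⟩ := cone_list hR L hβP
        have hcoord : ∀ θ : R.base, coord hR θ (w β) ≤ 0 := by
          intro θ
          have hwsum : w β = (m.map ⇑w).sum := by
            rw [← hsum]
            exact map_list_sum w m
          rw [hwsum, coord_list_sum]
          apply list_sum_nonpos
          intro t ht
          rw [List.map_map] at ht
          obtain ⟨y, hy, rfl⟩ := List.mem_map.mp ht
          have hyB := hm y hy
          have hwyr : w y ∈ R.roots := hwroot y (hR.pos_subset hyB.1.1)
          have hwynp : w y ∉ R.pos := hc y hyB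
          rcases pos_or_neg hR hwyr with h' | ⟨h', _⟩
          · exact absurd h' hwynp
          · have := coord_nonneg hR h' θ
            rw [map_neg] at this
            simp only [Function.comp_apply]
            linarith
        obtain ⟨θ, hθ⟩ := exists_coord_pos hR hwβP.1
        exact absurd hθ (not_lt.mpr (hcoord θ))
      obtain ⟨γ, hγB, hwγp⟩ := hexγ
      have hγP : γ ∈ P := hγB.1
      have hwγP : w γ ∈ P := ⟨hwγp, hwL γ hγP.2⟩
      -- the reflection image of P
      have hsP : (⇑(rootRefl γ)) '' P = (P \ {γ}) ∪ {-γ} := by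
        ext x
        constructor
        · rintro ⟨y, hy, rfl⟩
          rcases eq_or_ne y γ with rfl | hne
          · right; rw [rootRefl_self]; rfl
          · left
            obtain ⟨h1, h2⟩ := baseOf_refl hR L hγB hy hne
            exact ⟨h1, h2⟩
        · rintro (⟨hx, hxne⟩ | hx)
          · refine ⟨rootRefl γ x, (baseOf_refl hR L hγB hx hxne).1, rootRefl_rootRefl γ x⟩
          · rw [Set.mem_singleton_iff] at hx
            subst hx
            exact ⟨γ, hγP, rootRefl_self γ⟩
      set l' := l ++ [γ] with hl'
      have hl'B : ∀ δ ∈ l', δ ∈ baseOf P := by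
        intro δ hδ
        rcases List.mem_append.mp hδ with h' | h'
        · exact hlB δ h'
        · rw [List.mem_singleton.mp h']; exact hγB
      have hw' : (l'.map rootRefl).prod = w * rootRefl γ := by
        rw [hl', List.map_append, List.prod_append]
        simp
        exact hw.symm
      have himg : ⇑((l'.map rootRefl).prod) '' P = (⇑w '' (P \ {γ})) ∪ {-(w γ)} := by
        rw [hw']
        have hcomp : ⇑(w * rootRefl γ) = ⇑w ∘ ⇑(rootRefl γ) := rfl
        rw [hcomp, Set.image_comp, hsP, Set.image_union, Set.image_singleton, map_neg]
      have hinter : (⇑((l'.map rootRefl).prod) '' P) ∩ P = ((⇑w '' P) ∩ P) \ {w γ} := by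
        rw [himg]
        rw [Set.image_diff w.injective, Set.image_singleton]
        ext x
        simp only [Set.mem_inter_iff, Set.mem_union, Set.mem_diff, Set.mem_singleton_iff]
        constructor
        · rintro ⟨h' | h', hxP⟩
          · exact ⟨⟨h'.1, hxP⟩, h'.2⟩
          · subst h'
            exact absurd hxP.1 (neg_not_pos hR hwγp)
        · rintro ⟨⟨h1, h2⟩, h3⟩
          exact ⟨Or.inl ⟨h1, h3⟩, h2⟩
      have hmemγ : w γ ∈ (⇑w '' P) ∩ P := ⟨⟨γ, hγP, rfl⟩, hwγP⟩
      have hncard : ((⇑((l'.map rootRefl).prod) '' P) ∩ P).ncard = n - 1 := by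
        rw [hinter, Set.ncard_diff_singleton_of_mem hmemγ, hn]
      exact ih (n - 1) (by omega) l' hl'B hncard
  apply main (((⇑((([] : List V).map rootRefl).prod) '' P) ∩ P).ncard) []
  · simp
  · rfl

end CorAux

end PartE3

section PartF

variable {V : Type*} [NormedAddCommGroup V] [InnerProductSpace ℝ V] [FiniteDimensional ℝ V]
variable {R : RootData V} {Θ : Set V}

namespace CorAux

attribute [local instance] Classical.propDecidable

lemma res_sub_mem (Θ : Set V) (v : V) : v - resTheta Θ v ∈ Submodule.span ℝ Θ := by
  have h := Submodule.starProjection_add_starProjection_orthogonal (K := aTheta Θ) v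
  simp only [Submodule.starProjection_apply] at h
  have h2 : v - resTheta Θ v = ((aTheta Θ)ᗮ.orthogonalProjectionOnto v : V) := by
    rw [resTheta]
    linear_combination (norm := abel) -h
  rw [h2]
  have h3 : (aTheta Θ)ᗮ = Submodule.span ℝ Θ := Submodule.orthogonal_orthogonal _
  rw [← h3]
  exact SetLike.coe_mem _

lemma res_eq_zero_iff (Θ : Set V) (v : V) :
    resTheta Θ v = 0 ↔ v ∈ Submodule.span ℝ Θ := by
  rw [resTheta]
  rw [show (((aTheta Θ).orthogonalProjectionOnto v : V) = 0 ↔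
      (aTheta Θ).orthogonalProjectionOnto v = 0) from
    ⟨fun h => Subtype.ext h, fun h => congrArg _ h⟩]
  rw [Submodule.orthogonalProjectionOnto_eq_zero_iff]
  rw [show (aTheta Θ)ᗮ = Submodule.span ℝ Θ from Submodule.orthogonal_orthogonal _]

lemma res_add (Θ : Set V) (x y : V) :
    resTheta Θ (x + y) = resTheta Θ x + resTheta Θ y := by
  simp [resTheta, map_add]

lemma res_smul (Θ : Set V) (c : ℝ) (x : V) :
    resTheta Θ (c • x) = c • resTheta Θ x := by
  simp [resTheta, map_smul]

lemma res_sub (Θ : Set V) (x y : V) :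
    resTheta Θ (x - y) = resTheta Θ x - resTheta Θ y := by
  simp [resTheta, map_sub]

lemma res_res (Θ : Set V) (v : V) : resTheta Θ (resTheta Θ v) = resTheta Θ v := by
  rw [resTheta, resTheta]
  congr 1
  exact Submodule.orthogonalProjectionOnto_mem_subspace_eq_self (((aTheta Θ).orthogonalProjectionOnto) v)

lemma res_of_span (Θ : Set V) {v : V} (hv : v ∈ Submodule.span ℝ Θ) : resTheta Θ v = 0 :=
  (res_eq_zero_iff Θ v).mpr hv

/-- The subspace spanned by `Δ(α)`. -/
noncomputable def LA (Θ : Set V) (α : V) : Submodule ℝ V :=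
  Submodule.span ℝ Θ ⊔ Submodule.span ℝ {resTheta Θ α}

lemma mem_rootsAlong_iff (α β : V) :
    β ∈ R.rootsAlong Θ α ↔ β ∈ R.roots ∧ β ∈ LA Θ α := by
  constructor
  · rintro ⟨hβr, c, hc⟩
    refine ⟨hβr, ?_⟩
    have h1 : β = (β - resTheta Θ β) + c • resTheta Θ α := by rw [← hc]; abel
    rw [h1]
    exact Submodule.add_mem _
      (Submodule.mem_sup_left (res_sub_mem Θ β))
      (Submodule.mem_sup_right (Submodule.smul_mem _ _ (Submodule.mem_span_singleton_self _)))
  · rintro ⟨hβr, hβL⟩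
    refine ⟨hβr, ?_⟩
    obtain ⟨p, hp, q, hq, hpq⟩ := Submodule.mem_sup.mp hβL
    obtain ⟨c, rfl⟩ := Submodule.mem_span_singleton.mp hq
    refine ⟨c, ?_⟩
    rw [← hpq, res_add, res_smul, res_res, res_of_span Θ hp, zero_add]

lemma posAlong_eq (hR : R.IsRootSystem) (α : V) : R.posAlong Θ α = R.pos ∩ (LA Θ α : Set V) := by
  ext β
  rw [RootData.posAlong, Set.mem_inter_iff, Set.mem_inter_iff, mem_rootsAlong_iff]
  constructor
  · rintro ⟨⟨h1, h2⟩, h3⟩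
    exact ⟨h3, h2⟩
  · rintro ⟨h1, h2⟩
    exact ⟨⟨hR.pos_subset h1, h2⟩, h1⟩

lemma LA_eq_span (Θ : Set V) (α : V) : LA Θ α = Submodule.span ℝ (Θ ∪ {α}) := by
  apply le_antisymm
  · apply sup_le
    · exact Submodule.span_mono Set.subset_union_left
    · rw [Submodule.span_le, Set.singleton_subset_iff]
      have h1 : α - (α - resTheta Θ α) = resTheta Θ α := by abel
      rw [← h1]
      apply Submodule.sub_mem
      · exact Submodule.subset_span (Set.mem_union_right _ rfl)
      · exact Submodule.span_mono Set.subset_union_left (res_sub_mem Θ α)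
  · rw [Submodule.span_le]
    rintro x (hx | hx)
    · exact Submodule.mem_sup_left (Submodule.subset_span hx)
    · rw [Set.mem_singleton_iff] at hx
      subst hx
      have h2 : resTheta Θ x ∈ LA Θ x := Submodule.mem_sup_right
        (Submodule.subset_span rfl)
      have h3 : x - resTheta Θ x ∈ LA Θ x := Submodule.mem_sup_left (res_sub_mem Θ x)
      have h4 := Submodule.add_mem _ h3 h2
      rwa [sub_add_cancel] at h4

lemma base_indec (hR : R.IsRootSystem) {θ : V} (hθ : θ ∈ R.base) {a b : V}
    (ha : a ∈ R.pos) (hb : b ∈ R.pos) : θ ≠ a + b := by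
  intro heq
  set θi : R.base := ⟨θ, hθ⟩ with hθi
  have hzero : ∀ θ' : R.base, θ' ≠ θi → coord hR θ' a = 0 := by
    intro θ' hne
    have h1 : coord hR θ' θ = 0 := by
      have h2 : coord hR θ' ↑θi = if θi = θ' then 1 else 0 := coord_base hR θ' θi
      rw [show θ = ↑θi from rfl, h2, if_neg (fun e => hne e.symm)]
    have h3 : coord hR θ' a + coord hR θ' b = 0 := by
      rw [← map_add, ← heq, h1]
    have h4 := coord_nonneg hR ha θ'
    have h5 := coord_nonneg hR hb θ'
    linarith
  have haθ : a = coord hR θi a • θ := eq_smul_of_coords hR a θi hzero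
  have har : a ∈ R.roots := hR.pos_subset ha
  rcases hR.reduced θ (base_sub_roots hR hθ) (coord hR θi a) (by rw [← haθ]; exact har)
    with h1 | h1
  · rw [h1, one_smul] at haθ
    subst haθ
    have hb0 : b = 0 := by
      have : a + b = a := heq.symm
      linear_combination (norm := abel) this
    rw [hb0] at hb
    exact root_ne_zero hR (hR.pos_subset hb) rfl
  · have := coord_nonneg hR ha θi
    rw [h1] at this
    linarith

lemma pos_span_list (hR : R.IsRootSystem) (hΘ : Θ ⊆ R.base) {β : V} (hβ : β ∈ R.pos)
    (hmem : β ∈ Submodule.span ℝ Θ) :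
    ∃ l : List V, (∀ x ∈ l, x ∈ Θ) ∧ l.sum = β ∧ l ≠ [] := by
  obtain ⟨l, hl, hsum, hne⟩ := pos_list hR hβ
  refine ⟨l, ?_, hsum, hne⟩
  intro x hx
  by_contra hxΘ
  set θx : R.base := ⟨x, hl x hx⟩ with hθx
  have h0 : coord hR θx β = 0 := coord_zero_of_span hR hΘ hmem hxΘ
  have h1 : coord hR θx x = 1 := coord_base_self hR θx
  have h2 : (1 : ℝ) ≤ coord hR θx β := by
    rw [← hsum, coord_list_sum]
    rw [← h1]
    apply List.single_le_sum
    · intro t ht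
      obtain ⟨y, hy, rfl⟩ := List.mem_map.mp ht
      exact coord_base_nonneg hR θx (hl y hy)
    · exact List.mem_map_of_mem hx
  linarith

lemma baseOf_spanTheta (hR : R.IsRootSystem) (hΘ : Θ ⊆ R.base) :
    baseOf (R.pos ∩ (Submodule.span ℝ Θ : Set V)) = Θ := by
  ext γ
  constructor
  · rintro ⟨⟨hγp, hγs⟩, hind⟩
    by_contra hγΘ
    obtain ⟨l, hl, hsum, hne⟩ := pos_span_list hR hΘ hγp hγs
    obtain ⟨x, hxl, hip⟩ := exists_inner_pos hR hγp hsum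
    have hxΘ : x ∈ Θ := hl x hxl
    have hxb : x ∈ R.base := hΘ hxΘ
    have hxp : x ∈ R.pos := base_sub_pos hR hxb
    have hγr : γ ∈ R.roots := hR.pos_subset hγp
    have hxr : x ∈ R.roots := hR.pos_subset hxp
    have hne1 : γ ≠ x := fun e => hγΘ (e ▸ hxΘ)
    have hne2 : γ ≠ -x := by
      intro h
      rw [h] at hγp
      exact (neg_not_pos hR hxp) hγp
    have hsub : γ - x ∈ R.roots := root_sub_mem hR hγr hxr hip hne1 hne2
    rcases pos_or_neg hR hsub with hp | ⟨hp, _⟩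
    · exact hind ⟨x, ⟨hxp, Submodule.subset_span hxΘ⟩, γ - x,
        ⟨hp, Submodule.sub_mem _ hγs (Submodule.subset_span hxΘ)⟩, by abel⟩
    · rw [neg_sub] at hp
      exact base_indec hR hxb hγp hp (by abel)
  · intro hγ
    refine ⟨⟨base_sub_pos hR (hΘ hγ), Submodule.subset_span hγ⟩, ?_⟩
    rintro ⟨a, ha, b, hb, heq⟩
    exact base_indec hR (hΘ hγ) ha.1 hb.1 heq

lemma parab_memL {L : Submodule ℝ V} (hL : Submodule.span ℝ Θ ≤ L) {g : V ≃ₗ[ℝ] V}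
    (hg : g ∈ parabolicSub Θ) {v : V} (hv : v ∈ L) : g v ∈ L :=
  reflClosure_memL (fun x hx => hL (Submodule.subset_span hx)) hg hv

lemma listProd_parab_pos (hR : R.IsRootSystem) (hΘ : Θ ⊆ R.base) (l : List V)
    (hl : ∀ x ∈ l, x ∈ Θ) :
    ∀ β, β ∈ R.pos → β ∉ Submodule.span ℝ Θ →
      ((l.map rootRefl).prod) β ∈ R.pos ∧ ((l.map rootRefl).prod) β ∉ Submodule.span ℝ Θ := by
  induction l with
  | nil => intro β hβ hβs; simpa [oneApply] using ⟨hβ, hβs⟩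
  | cons a t ih =>
    intro β hβ hβs
    obtain ⟨hy, hys⟩ := ih (fun x hx => hl x (List.mem_cons_of_mem _ hx)) β hβ hβs
    set y := ((t.map rootRefl).prod) β with hydef
    have haΘ : a ∈ Θ := hl a (List.mem_cons_self)
    have hane : y ≠ a := by
      intro h
      rw [h] at hys
      exact hys (Submodule.subset_span haΘ)
    rw [List.map_cons, List.prod_cons, mulApply]
    constructor
    · exact (simple_refl_pos hR (hΘ haΘ) hy hane).1
    · intro hc
      apply hys
      have h2 : y = rootRefl a (rootRefl a y) := (rootRefl_rootRefl a y).symm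
      rw [h2, rootRefl_apply]
      exact Submodule.sub_mem _ hc (Submodule.smul_mem _ _ (Submodule.subset_span haΘ))

lemma parab_pos (hR : R.IsRootSystem) (hΘ : Θ ⊆ R.base) {g : V ≃ₗ[ℝ] V}
    (hg : g ∈ parabolicSub Θ) {β : V} (hβ : β ∈ R.pos) (hβs : β ∉ Submodule.span ℝ Θ) :
    g β ∈ R.pos ∧ g β ∉ Submodule.span ℝ Θ := by
  obtain ⟨l, hl, rfl⟩ := exists_rootList hg
  exact listProd_parab_pos hR hΘ l hl β hβ hβs

lemma wTheta_isLongest (hR : R.IsRootSystem) (hΘ : Θ ⊆ R.base) :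
    IsLongest (parabolicSub Θ) (R.pos ∩ (Submodule.span ℝ Θ : Set V)) (R.wTheta Θ) := by
  rw [RootData.wTheta]
  apply longest_isLongest
  apply exists_isLongest hR (Submodule.span ℝ Θ) (parabolicSub Θ)
  intro γ hγ
  rw [baseOf_spanTheta hR hΘ] at hγ
  exact Subgroup.subset_closure ⟨γ, hγ, rfl⟩

lemma wTheta_theta (hR : R.IsRootSystem) (hΘ : Θ ⊆ R.base) {θ : V} (hθ : θ ∈ Θ) :
    -(R.wTheta Θ θ) ∈ Θ := by
  have h1 := (wTheta_isLongest hR hΘ).2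
  have h2 : θ ∈ baseOf (R.pos ∩ (Submodule.span ℝ Θ : Set V)) := by
    rw [baseOf_spanTheta hR hΘ]; exact hθ
  have h3 := isLongest_base h1 h2
  rwa [baseOf_spanTheta hR hΘ] at h3

end CorAux

end PartF

section PartG

variable {V : Type*} [NormedAddCommGroup V] [InnerProductSpace ℝ V] [FiniteDimensional ℝ V]
variable {R : RootData V} {Θ : Set V}

namespace CorAux

attribute [local instance] Classical.propDecidable

lemma refl_gens_mono {S S' : Set V} (h : S ⊆ S') :
    {g : V ≃ₗ[ℝ] V | ∃ α ∈ S, g = rootRefl α} ⊆ {g | ∃ α ∈ S', g = rootRefl α} := by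
  rintro g ⟨α, hα, rfl⟩
  exact ⟨α, h hα, rfl⟩

lemma parab_le_weyl (hR : R.IsRootSystem) (hΘ : Θ ⊆ R.base) :
    parabolicSub Θ ≤ R.weylGroup :=
  Subgroup.closure_mono (refl_gens_mono (fun x hx => base_sub_roots hR (hΘ hx)))

lemma rootsAlong_sub_roots (α : V) : R.rootsAlong Θ α ⊆ R.roots := fun _ h => h.1

lemma weylAlong_le_weyl (α : V) : R.weylAlong Θ α ≤ R.weylGroup :=
  Subgroup.closure_mono (refl_gens_mono (rootsAlong_sub_roots α))

lemma wTheta_mem (Θ : Set V) : R.wTheta Θ ∈ parabolicSub Θ := by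
  rw [RootData.wTheta]
  exact longest_mem _ _

lemma w0_mem (Θ : Set V) (α : V) :
    longest (R.weylAlong Θ α) (R.posAlong Θ α) ∈ R.weylAlong Θ α :=
  longest_mem _ _

lemma weylAlong_isLongest (hR : R.IsRootSystem) (α : V) :
    IsLongest (R.weylAlong Θ α) (R.posAlong Θ α)
      (longest (R.weylAlong Θ α) (R.posAlong Θ α)) := by
  apply longest_isLongest
  rw [posAlong_eq hR α]
  apply exists_isLongest hR (LA Θ α) (R.weylAlong Θ α)
  intro γ hγ
  apply Subgroup.subset_closure
  exact ⟨γ, (mem_rootsAlong_iff (R := R) (Θ := Θ) α γ).mpr ⟨hR.pos_subset hγ.1.1, hγ.1.2⟩, rfl⟩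

lemma sigma_mem_weyl (hR : R.IsRootSystem) (hΘ : Θ ⊆ R.base) (α : V) :
    R.sigmaRefl Θ α ∈ R.weylGroup := by
  rw [RootData.sigmaRefl]
  exact Subgroup.mul_mem _ (weylAlong_le_weyl α (w0_mem (R := R) Θ α))
    (parab_le_weyl hR hΘ (wTheta_mem (R := R) Θ))

lemma sigma_sigma {α : V} (huse : R.IsUseful Θ α) (x : V) :
    R.sigmaRefl Θ α (R.sigmaRefl Θ α x) = x := by
  have h1 := pow_orderOf_eq_one (R.sigmaRefl Θ α)
  rw [RootData.IsUseful] at huse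
  rw [huse, pow_two] at h1
  calc R.sigmaRefl Θ α (R.sigmaRefl Θ α x)
      = (R.sigmaRefl Θ α * R.sigmaRefl Θ α) x := rfl
    _ = x := by rw [h1]; rfl

lemma sigma_apply (α x : V) :
    R.sigmaRefl Θ α x = longest (R.weylAlong Θ α) (R.posAlong Θ α) (R.wTheta Θ x) := rfl

lemma w0_image (hR : R.IsRootSystem) (α : V) :
    ⇑(longest (R.weylAlong Θ α) (R.posAlong Θ α)) '' (R.pos ∩ (LA Θ α : Set V))
      = (fun x => -x) '' (R.pos ∩ (LA Θ α : Set V)) := by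
  rw [← posAlong_eq hR α]
  exact (weylAlong_isLongest (R := R) (Θ := Θ) hR α).2

lemma w0_neg (hR : R.IsRootSystem) (α : V) {v : V} (hv : v ∈ R.pos ∩ (LA Θ α : Set V)) :
    -(longest (R.weylAlong Θ α) (R.posAlong Θ α) v) ∈ R.pos ∩ (LA Θ α : Set V) := by
  have h1 : longest (R.weylAlong Θ α) (R.posAlong Θ α) v
      ∈ (fun x => -x) '' (R.pos ∩ (LA Θ α : Set V)) := by
    rw [← w0_image hR α]
    exact ⟨v, hv, rfl⟩
  obtain ⟨p, hp, he⟩ := h1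
  rw [← he, neg_neg]
  exact hp

lemma sigma_neg (hR : R.IsRootSystem) (hΘ : Θ ⊆ R.base) {α β : V} (hβp : β ∈ R.pos)
    (hβL : β ∈ LA Θ α) (hβs : β ∉ Submodule.span ℝ Θ) :
    -(R.sigmaRefl Θ α β) ∈ R.pos ∧ R.sigmaRefl Θ α β ∈ LA Θ α := by
  have hw := parab_pos hR hΘ (wTheta_mem (R := R) Θ) hβp hβs
  have hwL : R.wTheta Θ β ∈ LA Θ α := parab_memL le_sup_left (wTheta_mem (R := R) Θ) hβL
  have h2 := w0_neg hR α (v := R.wTheta Θ β) ⟨hw.1, hwL⟩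
  rw [← sigma_apply] at h2
  refine ⟨h2.1, ?_⟩
  have h3 := Submodule.neg_mem _ h2.2
  rwa [neg_neg] at h3

lemma sigma_theta_mem (hR : R.IsRootSystem) (hΘ : Θ ⊆ R.base) {α : V}
    (huse : R.IsUseful Θ α) {θ : V} (hθ : θ ∈ Θ) : R.sigmaRefl Θ α θ ∈ Θ := by
  set γ : V := -(R.wTheta Θ θ) with hγdef
  have hγΘ : γ ∈ Θ := wTheta_theta hR hΘ hθ
  have hwθ : R.wTheta Θ θ = -γ := by rw [hγdef, neg_neg]
  have hγB : γ ∈ baseOf (R.pos ∩ (LA Θ α : Set V)) := by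
    refine ⟨⟨base_sub_pos hR (hΘ hγΘ), Submodule.mem_sup_left (Submodule.subset_span hγΘ)⟩, ?_⟩
    rintro ⟨a, ha, b, hb, heq⟩
    exact base_indec hR (hΘ hγΘ) ha.1 hb.1 heq
  have hσθ : R.sigmaRefl Θ α θ
      = -(longest (R.weylAlong Θ α) (R.posAlong Θ α) γ) := by
    rw [sigma_apply, hwθ, map_neg]
  have hσB : R.sigmaRefl Θ α θ ∈ baseOf (R.pos ∩ (LA Θ α : Set V)) := by
    rw [hσθ]
    exact isLongest_base (w0_image hR α) hγB
  by_cases hs : R.sigmaRefl Θ α θ ∈ Submodule.span ℝ Θ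
  · have h5 : R.sigmaRefl Θ α θ ∈ baseOf (R.pos ∩ (Submodule.span ℝ Θ : Set V)) := by
      refine ⟨⟨hσB.1.1, hs⟩, ?_⟩
      rintro ⟨a, ⟨hap, has⟩, b, ⟨hbp, hbs⟩, heq⟩
      exact hσB.2 ⟨a, ⟨hap, Submodule.mem_sup_left has⟩, b, ⟨hbp, Submodule.mem_sup_left hbs⟩, heq⟩
    rwa [baseOf_spanTheta hR hΘ] at h5
  · exfalso
    have h6 := sigma_neg hR hΘ (α := α) hσB.1.1 hσB.1.2 hs
    rw [sigma_sigma huse θ] at h6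
    exact (neg_not_pos hR (base_sub_pos hR (hΘ hθ))) h6.1

lemma sigma_theta_image (hR : R.IsRootSystem) (hΘ : Θ ⊆ R.base) {α : V}
    (huse : R.IsUseful Θ α) : ⇑(R.sigmaRefl Θ α) '' Θ = Θ := by
  apply linEquiv_image_eq (hR.finite.subset (fun x hx => base_sub_roots hR (hΘ hx)))
  rintro x ⟨θ, hθ, rfl⟩
  exact sigma_theta_mem hR hΘ huse hθ

lemma map_mem_span (g : V ≃ₗ[ℝ] V) (h : ⇑g '' Θ = Θ) {v : V}
    (hv : v ∈ Submodule.span ℝ Θ) : g v ∈ Submodule.span ℝ Θ := by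
  have h1 : g v ∈ Submodule.map (g : V →ₗ[ℝ] V) (Submodule.span ℝ Θ) := ⟨v, hv, rfl⟩
  rwa [Submodule.map_span, LinearEquiv.coe_coe, h] at h1

lemma image_inv (g : V ≃ₗ[ℝ] V) (h : ⇑g '' Θ = Θ) : ⇑g⁻¹ '' Θ = Θ := by
  conv_lhs => rw [← h]
  rw [← Set.image_comp]
  have : ⇑g⁻¹ ∘ ⇑g = id := by
    funext x
    show g⁻¹ (g x) = x
    calc g⁻¹ (g x) = (g⁻¹ * g) x := rfl
      _ = x := by rw [inv_mul_cancel]; rfl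
  rw [this, Set.image_id]

lemma map_not_mem_span (g : V ≃ₗ[ℝ] V) (h : ⇑g '' Θ = Θ) {v : V}
    (hv : v ∉ Submodule.span ℝ Θ) : g v ∉ Submodule.span ℝ Θ := by
  intro hc
  apply hv
  have h2 := map_mem_span g⁻¹ (image_inv g h) hc
  have h3 : g⁻¹ (g v) = v := by
    calc g⁻¹ (g v) = (g⁻¹ * g) v := rfl
      _ = v := by rw [inv_mul_cancel]; rfl
  rwa [h3] at h2

-- preservation of positive roots outside Δ(α), for g ∈ W(Δ(α)), α simple
lemma along_refl_step (hR : R.IsRootSystem) (hΘ : Θ ⊆ R.base) {α : V} (hαb : α ∈ R.base)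
    {δ : V} (hδ : δ ∈ R.rootsAlong Θ α) {y : V} (hy : y ∈ R.pos) (hyL : y ∉ LA Θ α) :
    rootRefl δ y ∈ R.pos ∧ rootRefl δ y ∉ LA Θ α := by
  have hΘα : Θ ∪ {α} ⊆ R.base := by
    rintro x (hx | hx)
    · exact hΘ hx
    · rw [Set.mem_singleton_iff] at hx; subst hx; exact hαb
  obtain ⟨hδr, hδL⟩ := (mem_rootsAlong_iff (R := R) (Θ := Θ) α δ).mp hδ
  have hroot : rootRefl δ y ∈ R.roots := hR.reflect_mem δ hδr y (hR.pos_subset hy)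
  have hnotL : rootRefl δ y ∉ LA Θ α := by
    intro hc
    apply hyL
    have h2 : y = rootRefl δ (rootRefl δ y) := (rootRefl_rootRefl δ y).symm
    rw [h2, rootRefl_apply]
    exact Submodule.sub_mem _ hc (Submodule.smul_mem _ _ hδL)
  refine ⟨?_, hnotL⟩
  -- find a coordinate outside Θ ∪ {α}
  have hπ : ∃ π : R.base, (π : V) ∉ Θ ∪ {α} ∧ 0 < coord hR π y := by
    by_contra hc
    push_neg at hc
    apply hyL
    rw [LA_eq_span]
    apply mem_span_of_coords hR
    intro π hπne
    by_contra hπΘ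
    have h3 := hc π hπΘ
    have h4 := coord_nonneg hR hy π
    exact hπne (le_antisymm h3 h4)
  obtain ⟨π, hπn, hπpos⟩ := hπ
  apply mem_pos_of_coord_pos hR hroot (θ := π)
  rw [rootRefl_apply, map_sub, map_smul]
  have hδcoord : coord hR π δ = 0 := by
    apply coord_zero_of_span hR hΘα _ hπn
    rw [← LA_eq_span]
    exact hδL
  rw [hδcoord]
  simpa using hπpos

lemma along_pres (hR : R.IsRootSystem) (hΘ : Θ ⊆ R.base) {α : V} (hαb : α ∈ R.base)
    {g : V ≃ₗ[ℝ] V} (hg : g ∈ R.weylAlong Θ α) {β : V} (hβ : β ∈ R.pos)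
    (hβL : β ∉ LA Θ α) : g β ∈ R.pos ∧ g β ∉ LA Θ α := by
  obtain ⟨l, hl, rfl⟩ := exists_rootList hg
  clear hg
  induction l with
  | nil => simpa [oneApply] using ⟨hβ, hβL⟩
  | cons a t ih =>
    obtain ⟨h1, h2⟩ := ih (fun x hx => hl x (List.mem_cons_of_mem _ hx))
    rw [List.map_cons, List.prod_cons, mulApply]
    exact along_refl_step hR hΘ hαb (hl a (List.mem_cons_self)) h1 h2

end CorAux

end PartG

section PartH

variable {V : Type*} [NormedAddCommGroup V] [InnerProductSpace ℝ V] [FiniteDimensional ℝ V]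
variable {R : RootData V} {Θ : Set V}

namespace CorAux

attribute [local instance] Classical.propDecidable

lemma weyl_root (hR : R.IsRootSystem) {g : V ≃ₗ[ℝ] V} (hg : g ∈ R.weylGroup) {β : V}
    (hβ : β ∈ R.roots) : g β ∈ R.roots :=
  reflClosure_root hR (subset_refl R.roots) hg hβ

lemma root_pos_of_pos_list (hR : R.IsRootSystem) {v : V} (hv : v ∈ R.roots) {m : List V}
    (hm : ∀ x ∈ m, x ∈ R.pos) (hsum : m.sum = v) : v ∈ R.pos := by
  have hco : ∀ θ : R.base, 0 ≤ coord hR θ v := by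
    intro θ
    rw [← hsum, coord_list_sum]
    apply List.sum_nonneg
    intro t ht
    obtain ⟨y, hy, rfl⟩ := List.mem_map.mp ht
    exact coord_nonneg hR (hm y hy) θ
  rcases pos_or_neg hR hv with h | ⟨h, _⟩
  · exact h
  · exfalso
    have hzero : ∀ θ : R.base, coord hR θ v = 0 := by
      intro θ
      have h1 := coord_nonneg hR h θ
      rw [map_neg] at h1
      linarith [hco θ]
    exact root_ne_zero hR hv (eq_zero_of_coords hR hzero)

lemma wset_theta (hw : ⇑(w : V ≃ₗ[ℝ] V) '' Θ = Θ) {θ : V} (hθ : θ ∈ Θ) : w θ ∈ Θ := by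
  rw [← hw]
  exact ⟨θ, hθ, rfl⟩

lemma wset_pos_span (hR : R.IsRootSystem) (hΘ : Θ ⊆ R.base) {w : V ≃ₗ[ℝ] V}
    (hw : w ∈ R.Wset Θ) {β : V} (hβp : β ∈ R.pos) (hβs : β ∈ Submodule.span ℝ Θ) :
    w β ∈ R.pos := by
  obtain ⟨l, hl, hsum, hne⟩ := pos_span_list hR hΘ hβp hβs
  have hsum' : (l.map ⇑w).sum = w β := by rw [← map_list_sum w l, hsum]
  apply root_pos_of_pos_list hR (weyl_root hR hw.1 (hR.pos_subset hβp)) _ hsum'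
  intro x hx
  obtain ⟨y, hy, rfl⟩ := List.mem_map.mp hx
  exact base_sub_pos hR (hΘ (wset_theta hw.2 (hl y hy)))

lemma base_not_mem_span (hR : R.IsRootSystem) (hΘ : Θ ⊆ R.base) {α : V}
    (hαb : α ∈ R.base) (hαΘ : α ∉ Θ) : α ∉ Submodule.span ℝ Θ := by
  intro hc
  have h0 : coord hR ⟨α, hαb⟩ α = 0 := coord_zero_of_span hR hΘ hc hαΘ
  have h1 : coord hR ⟨α, hαb⟩ ↑(⟨α, hαb⟩ : R.base) = 1 := coord_base_self hR _
  rw [show ((⟨α, hαb⟩ : R.base) : V) = α from rfl, h0] at h1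
  exact zero_ne_one h1

/-- The functional counting coordinates outside `Θ`. -/
noncomputable def psiT (hR : R.IsRootSystem) (Θ : Set V) : V →ₗ[ℝ] ℝ :=
  (bas hR).constr ℝ (fun θ => if (θ : V) ∈ Θ then 0 else 1)

lemma psiT_base (hR : R.IsRootSystem) {x : V} (hx : x ∈ R.base) :
    psiT hR Θ x = if x ∈ Θ then 0 else 1 := by
  have h1 : psiT hR Θ ((bas hR) ⟨x, hx⟩) = if ((⟨x, hx⟩ : R.base) : V) ∈ Θ then 0 else 1 :=
    Module.Basis.constr_basis _ _ _ _
  rwa [bas_apply] at h1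

lemma psiT_span (hR : R.IsRootSystem) (hΘ : Θ ⊆ R.base) {v : V}
    (hv : v ∈ Submodule.span ℝ Θ) : psiT hR Θ v = 0 := by
  induction hv using Submodule.span_induction with
  | mem x hx => rw [psiT_base hR (hΘ hx), if_pos hx]
  | zero => simp
  | add x y _ _ hx hy => rw [map_add, hx, hy, add_zero]
  | smul c x _ hx => rw [map_smul, hx, smul_zero]

lemma psiT_pos_nonneg (hR : R.IsRootSystem) {β : V} (hβ : β ∈ R.pos) :
    0 ≤ psiT hR Θ β := by
  obtain ⟨l, hl, hsum, _⟩ := pos_list hR hβ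
  rw [← hsum, map_list_sum' (psiT hR Θ)]
  apply List.sum_nonneg
  intro t ht
  obtain ⟨y, hy, rfl⟩ := List.mem_map.mp ht
  rw [psiT_base hR (hl y hy)]
  split <;> norm_num

lemma wset_A_neg (hR : R.IsRootSystem) (hΘ : Θ ⊆ R.base) {w : V ≃ₗ[ℝ] V}
    (hw : w ∈ R.Wset Θ) {α : V} (hαb : α ∈ R.base) (hαΘ : α ∉ Θ)
    (hwα : w α ∉ R.pos) {β : V} (hβp : β ∈ R.pos) (hβL : β ∈ LA Θ α)
    (hβs : β ∉ Submodule.span ℝ Θ) : w β ∉ R.pos := by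
  obtain ⟨p, hp, q, hq, hpq⟩ := Submodule.mem_sup.mp hβL
  obtain ⟨c, rfl⟩ := Submodule.mem_span_singleton.mp hq
  have hh : β - c • α ∈ Submodule.span ℝ Θ := by
    have h1 : β - c • α = p - c • (α - resTheta Θ α) := by
      rw [← hpq]; rw [smul_sub]; abel
    rw [h1]
    exact Submodule.sub_mem _ hp (Submodule.smul_mem _ _ (res_sub_mem Θ α))
  have hβeq : β = c • α + (β - c • α) := by abel
  -- c > 0
  have hαnotin : α ∉ Submodule.span ℝ Θ := base_not_mem_span hR hΘ hαb hαΘ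
  have hψα : psiT hR Θ α = 1 := by rw [psiT_base hR hαb, if_neg hαΘ]
  have hψβ : psiT hR Θ β = c := by
    conv_lhs => rw [hβeq]
    rw [map_add, map_smul, hψα, psiT_span hR hΘ hh]
    simp
  have hcnonneg : 0 ≤ c := hψβ ▸ psiT_pos_nonneg hR hβp
  have hcne : c ≠ 0 := by
    intro h
    apply hβs
    rw [h, zero_smul, sub_zero] at hh
    exact hh
  have hcpos : 0 < c := lt_of_le_of_ne hcnonneg (Ne.symm hcne)
  -- coordinate of w α
  have hwαr : w α ∈ R.roots := weyl_root hR hw.1 (base_sub_roots hR hαb)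
  have hnwα : -(w α) ∈ R.pos := by
    rcases pos_or_neg hR hwαr with h | ⟨h, _⟩
    · exact absurd h hwα
    · exact h
  have hwαs : w α ∉ Submodule.span ℝ Θ := map_not_mem_span w hw.2 hαnotin
  have hπ : ∃ π : R.base, (π : V) ∉ Θ ∧ 0 < coord hR π (-(w α)) := by
    by_contra hc
    push_neg at hc
    apply hwαs
    have h2 : -(w α) ∈ Submodule.span ℝ Θ := by
      apply mem_span_of_coords hR
      intro π hπ
      by_contra hπΘ
      exact hπ (le_antisymm (hc π hπΘ) (coord_nonneg hR hnwα π))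
    have h3 := Submodule.neg_mem _ h2
    rwa [neg_neg] at h3
  obtain ⟨π, hπΘ, hπpos⟩ := hπ
  apply not_pos_of_coord_neg hR (θ := π)
  have hwβ : w β = c • (w α) + w (β - c • α) := by
    conv_lhs => rw [hβeq]
    rw [map_add, map_smul]
  rw [hwβ, map_add, map_smul]
  have hzero : coord hR π (w (β - c • α)) = 0 :=
    coord_zero_of_span hR hΘ (map_mem_span w hw.2 hh) hπΘ
  rw [hzero, add_zero]
  rw [map_neg] at hπpos
  have : coord hR π (w α) < 0 := by linarith
  simp only [smul_eq_mul]
  exact mul_neg_of_pos_of_neg hcpos this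

lemma sigma_mul_self {α : V} (huse : R.IsUseful Θ α) :
    R.sigmaRefl Θ α * R.sigmaRefl Θ α = 1 := by
  have h1 := pow_orderOf_eq_one (R.sigmaRefl Θ α)
  rw [RootData.IsUseful] at huse
  rwa [huse, pow_two] at h1

lemma sigma_pres_C (hR : R.IsRootSystem) (hΘ : Θ ⊆ R.base) {α : V} (hαb : α ∈ R.base)
    {β : V} (hβp : β ∈ R.pos) (hβL : β ∉ LA Θ α) (hβs : β ∉ Submodule.span ℝ Θ) :
    R.sigmaRefl Θ α β ∈ R.pos ∧ R.sigmaRefl Θ α β ∉ LA Θ α := by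
  have h1 := parab_pos hR hΘ (wTheta_mem (R := R) Θ) hβp hβs
  have h2 : R.wTheta Θ β ∉ LA Θ α := by
    apply reflClosure_not_memL (L := LA Θ α) (S := Θ)
      (fun x hx => (le_sup_left : Submodule.span ℝ Θ ≤ LA Θ α) (Submodule.subset_span hx))
      (wTheta_mem (R := R) Θ) hβL
  rw [RootData.sigmaRefl, mulApply]
  exact along_pres hR hΘ hαb (w0_mem (R := R) Θ α) h1.1 h2

lemma main_induction (hR : R.IsRootSystem) (hΘ : Θ ⊆ R.base) (hnorm : R.IsNormal Θ)
    (n : ℕ) : ∀ w ∈ R.Wset Θ,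
    {β : V | β ∈ R.pos ∧ β ∉ Submodule.span ℝ Θ ∧ w β ∉ R.pos}.ncard = n →
    w ∈ R.WThetaPrime Θ := by
  induction n using Nat.strong_induction_on with
  | _ n ih =>
  intro w hw hn
  set N := {β : V | β ∈ R.pos ∧ β ∉ Submodule.span ℝ Θ ∧ w β ∉ R.pos} with hN
  have hNfin : N.Finite := hR.finite.subset (fun x hx => hR.pos_subset hx.1)
  rcases Nat.eq_zero_or_pos n with rfl | hnpos
  · -- w preserves positives, hence w = 1
    have hNempty : N = ∅ := (Set.ncard_eq_zero hNfin).mp hn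
    have hpres : ∀ β ∈ R.pos, w β ∈ R.pos := by
      intro β hβ
      by_cases hs : β ∈ Submodule.span ℝ Θ
      · exact wset_pos_span hR hΘ hw hβ hs
      · by_contra hc
        have : β ∈ N := ⟨hβ, hs, hc⟩
        rw [hNempty] at this
        exact this
    have h1 := eq_one_of_pos_preserved hR hw.1 hpres
    rw [h1]
    exact Subgroup.one_mem _
  · -- find a simple root moved to a negative root
    have hex : ∃ αs ∈ R.base, αs ∉ Θ ∧ w αs ∉ R.pos := by
      by_contra hc
      push_neg at hc
      have hbase : ∀ x ∈ R.base, w x ∈ R.pos := by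
        intro x hx
        by_cases hxΘ : x ∈ Θ
        · exact base_sub_pos hR (hΘ (wset_theta hw.2 hxΘ))
        · exact hc x hx hxΘ
      have hup : ∀ β ∈ R.pos, w β ∈ R.pos := by
        intro β hβ
        obtain ⟨l, hl, hsum, _⟩ := pos_list hR hβ
        have hsum' : (l.map ⇑w).sum = w β := by rw [← map_list_sum w l, hsum]
        apply root_pos_of_pos_list hR (weyl_root hR hw.1 (hR.pos_subset hβ)) _ hsum'
        intro x hx
        obtain ⟨y, hy, rfl⟩ := List.mem_map.mp hx
        exact hbase y (hl y hy)
      have hNne : N.Nonempty := Set.nonempty_of_ncard_ne_zero (by omega)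
      obtain ⟨β, hβ⟩ := hNne
      exact hβ.2.2 (hup β hβ.1)
    obtain ⟨αs, hαb, hαΘ, hwα⟩ := hex
    have huse : R.IsUseful Θ αs := hnorm αs ⟨hαb, hαΘ⟩
    have hαs : αs ∉ Submodule.span ℝ Θ := base_not_mem_span hR hΘ hαb hαΘ
    have hres : resTheta Θ αs ≠ 0 := fun h => hαs ((res_eq_zero_iff Θ αs).mp h)
    have hαpos : αs ∈ R.pos := base_sub_pos hR hαb
    have hαLA : αs ∈ LA Θ αs := by
      rw [LA_eq_span]
      exact Submodule.subset_span (Set.mem_union_right _ rfl)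
    have hruPos : αs ∈ R.ruPos Θ := by
      refine ⟨hαpos, ⟨hres, ?_⟩, huse⟩
      rw [posAlong_eq hR αs]
      refine ⟨⟨hαpos, hαLA⟩, ?_⟩
      rintro ⟨a, ha, b, hb, heq⟩
      exact base_indec hR hαb ha.1 hb.1 heq
    set σ := R.sigmaRefl Θ αs with hσ
    have hσW' : σ ∈ R.WThetaPrime Θ := Subgroup.subset_closure ⟨αs, hruPos, rfl⟩
    have hσim : ⇑σ '' Θ = Θ := sigma_theta_image hR hΘ huse
    have hσWset : σ ∈ R.Wset Θ := ⟨sigma_mem_weyl hR hΘ αs, hσim⟩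
    have hwσ : w * σ ∈ R.Wset Θ := by
      refine ⟨Subgroup.mul_mem _ hw.1 hσWset.1, ?_⟩
      have h1 : ⇑(w * σ) = ⇑w ∘ ⇑σ := rfl
      rw [h1, Set.image_comp, hσim, hw.2]
    set A := {β : V | β ∈ R.pos ∧ β ∈ LA Θ αs ∧ β ∉ Submodule.span ℝ Θ} with hA
    set E := {β : V | β ∈ R.pos ∧ β ∉ Submodule.span ℝ Θ ∧ β ∉ LA Θ αs ∧ w β ∉ R.pos}
      with hE
    have hAfin : A.Finite := hR.finite.subset (fun x hx => hR.pos_subset hx.1)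
    have hEfin : E.Finite := hR.finite.subset (fun x hx => hR.pos_subset hx.1)
    have hAneg : ∀ β ∈ A, w β ∉ R.pos := by
      rintro β ⟨hp, hL, hs⟩
      exact wset_A_neg hR hΘ hw hαb hαΘ hwα hp hL hs
    have hNsplit : N = A ∪ E := by
      ext β
      constructor
      · rintro ⟨hp, hs, hneg⟩
        by_cases hL : β ∈ LA Θ αs
        · exact Or.inl ⟨hp, hL, hs⟩
        · exact Or.inr ⟨hp, hs, hL, hneg⟩
      · rintro (⟨hp, hL, hs⟩ | ⟨hp, hs, hL, hneg⟩)
        · exact ⟨hp, hs, hAneg β ⟨hp, hL, hs⟩⟩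
        · exact ⟨hp, hs, hneg⟩
    have hdisj : Disjoint A E := by
      rw [Set.disjoint_left]
      rintro β ⟨_, hL, _⟩ ⟨_, _, hL', _⟩
      exact hL' hL
    have hαA : αs ∈ A := ⟨hαpos, hαLA, hαs⟩
    -- inversion set of w * σ
    have hNw' : {β : V | β ∈ R.pos ∧ β ∉ Submodule.span ℝ Θ ∧ (w * σ) β ∉ R.pos}
        = ⇑σ '' E := by
      ext β
      constructor
      · rintro ⟨hp, hs, hneg⟩
        rw [mulApply] at hneg
        by_cases hL : β ∈ LA Θ αs
        · exfalso
          obtain ⟨h1, h2⟩ := sigma_neg hR hΘ hp hL hs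
          have hσβs : σ β ∉ Submodule.span ℝ Θ := map_not_mem_span σ hσim hs
          have hmemA : -(σ β) ∈ A := by
            refine ⟨h1, Submodule.neg_mem _ h2, ?_⟩
            intro hc
            apply hσβs
            have h3 := Submodule.neg_mem _ hc
            rwa [neg_neg] at h3
          have h4 := hAneg _ hmemA
          rw [map_neg] at h4
          apply hneg
          apply pos_of_neg_not_pos hR _ h4
          exact weyl_root hR hw.1 (weyl_root hR hσWset.1 (hR.pos_subset hp))
        · obtain ⟨h1, h2⟩ := sigma_pres_C hR hΘ hαb hp hL hs
          refine ⟨σ β, ⟨h1, map_not_mem_span σ hσim hs, h2, hneg⟩, sigma_sigma huse β⟩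
      · rintro ⟨γ, ⟨hγp, hγs, hγL, hγw⟩, rfl⟩
        obtain ⟨h1, h2⟩ := sigma_pres_C hR hΘ hαb hγp hγL hγs
        refine ⟨h1, map_not_mem_span σ hσim hγs, ?_⟩
        rw [mulApply, sigma_sigma huse γ]
        exact hγw
    have hcard : {β : V | β ∈ R.pos ∧ β ∉ Submodule.span ℝ Θ ∧ (w * σ) β ∉ R.pos}.ncard
        = E.ncard := by
      rw [hNw', Set.ncard_image_of_injective E σ.injective]
    have hnE : E.ncard < n := by
      have h1 : N.ncard = A.ncard + E.ncard := by
        rw [hNsplit, Set.ncard_union_eq hdisj hAfin hEfin]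
      have h2 : 0 < A.ncard := (Set.ncard_pos hAfin).mpr ⟨αs, hαA⟩
      rw [hn] at h1
      omega
    have hrec := ih E.ncard hnE (w * σ) hwσ hcard
    have hfinal : w = (w * σ) * σ := by
      rw [mul_assoc, sigma_mul_self huse, mul_one]
    rw [hfinal]
    exact Subgroup.mul_mem _ hrec hσW'

end CorAux

end PartH
end CorollaryProof

/-- Corollary 3.3.5: if `Θ` is normal then `W(Θ)′ = W(Θ)`. -/
theorem WThetaPrime_eq_Wset_of_isNormal (R : RootData V) (hR : R.IsRootSystem)
    (Θ : Set V) (hΘ : Θ ⊆ R.base) (hne : Θ ≠ R.base) (hnorm : R.IsNormal Θ) :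
    (R.WThetaPrime Θ : Set (V ≃ₗ[ℝ] V)) = R.Wset Θ := by
  ext w
  constructor
  · intro hw
    have hle : R.WThetaPrime Θ ≤
        ({ carrier := R.Wset Θ
           one_mem' := ⟨Subgroup.one_mem _,
             by rw [show ⇑(1 : V ≃ₗ[ℝ] V) = id from rfl, Set.image_id]⟩
           mul_mem' := by
             rintro a b ⟨haW, haΘ⟩ ⟨hbW, hbΘ⟩
             refine ⟨Subgroup.mul_mem _ haW hbW, ?_⟩
             rw [show ⇑(a * b) = ⇑a ∘ ⇑b from rfl, Set.image_comp, hbΘ, haΘ]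
           inv_mem' := by
             rintro a ⟨haW, haΘ⟩
             exact ⟨Subgroup.inv_mem _ haW, CorAux.image_inv a haΘ⟩ } :
          Subgroup (V ≃ₗ[ℝ] V)) := by
      rw [RootData.WThetaPrime, Subgroup.closure_le]
      rintro g ⟨α, ⟨hαp, hred, huse⟩, rfl⟩
      exact ⟨CorAux.sigma_mem_weyl hR hΘ α, CorAux.sigma_theta_image hR hΘ huse⟩
    exact hle hw
  · intro hw
    exact CorAux.main_induction hR hΘ hnorm _ w hw rfl

end
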